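/- arXiv:0912.5398 — 2 statements merged into one kernel-verified Lean document; each statement's English description precedes it below -/
import Mathlib

section
/- Let $D = \{(x_1,\dots,x_d) \in \mathbb{R}^d : x_1 > g(x_2,\dots,x_d)\}$ where $g : \mathbb{R}^{d-1} \to \mathbb{R}$ is upper semicontinuous, and let $S_1,\dots,S_N \subset \mathbb{R}^d$ be compact convex sets. Then the configuration space ${\bf D} = \{(x^1,\dots,x^N) \in \mathbb{R}^{Nd} : (S_k + x^k) \subset D \text{ for all } k, \text{ and } (S_j + x^j) \cap (S_k + x^k) = \emptyset \text{ for } j \neq k\}$ is pathwise connected. -/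
open Set

namespace Stmt5Aux

variable {m N : ℕ}


variable {m N : ℕ}

/-- ambient space -/
local notation "E" => (ℝ × (Fin m → ℝ))

/-- the configuration domain -/
def dom (g : (Fin m → ℝ) → ℝ) (S : Fin N → Set (ℝ × (Fin m → ℝ))) :
    Set (Fin N → ℝ × (Fin m → ℝ)) :=
  {x : Fin N → ℝ × (Fin m → ℝ) |
    (∀ k, (fun s => s + x k) '' S k ⊆ {p | g p.2 < p.1}) ∧
    Pairwise fun j k =>
      ((fun s => s + x j) '' S j) ∩ ((fun s => s + x k) '' S k) = ∅}

lemma mem_dom_iff {g : (Fin m → ℝ) → ℝ} {S : Fin N → Set (ℝ × (Fin m → ℝ))}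
    {x : Fin N → ℝ × (Fin m → ℝ)} :
    x ∈ dom g S ↔ (∀ k, ∀ a ∈ S k, g ((a + x k).2) < (a + x k).1) ∧
      (∀ j k, j ≠ k → ∀ a ∈ S j, ∀ b ∈ S k, a + x j ≠ b + x k) := by
  constructor
  · rintro ⟨h1, h2⟩
    refine ⟨fun k a ha => h1 k ⟨a, ha, rfl⟩, fun j k hjk a ha b hb hab => ?_⟩
    have hmem : a + x j ∈ ((fun s => s + x j) '' S j) ∩ ((fun s => s + x k) '' S k) :=
      ⟨⟨a, ha, rfl⟩, ⟨b, hb, hab.symm⟩⟩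
    rw [h2 hjk] at hmem
    exact hmem
  · rintro ⟨h1, h2⟩
    constructor
    · rintro k p ⟨a, ha, rfl⟩
      exact h1 k a ha
    · intro j k hjk
      ext p
      simp only [mem_inter_iff, mem_image, mem_empty_iff_false, iff_false, not_and]
      rintro ⟨a, ha, rfl⟩ ⟨b, hb, hb2⟩
      exact h2 j k hjk a ha b hb hb2.symm

/-- distance lower bound via first coordinate -/
lemma fst_le_dist (p q : ℝ × (Fin m → ℝ)) : |p.1 - q.1| ≤ dist p q := by
  rw [Prod.dist_eq, ← Real.dist_eq]
  exact le_max_left _ _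

/-- distance lower bound via a horizontal coordinate -/
lemma coord_le_dist (p q : ℝ × (Fin m → ℝ)) (i : Fin m) : |p.2 i - q.2 i| ≤ dist p q := by
  rw [Prod.dist_eq, ← Real.dist_eq]
  exact le_trans (dist_le_pi_dist p.2 q.2 i) (le_max_right _ _)

lemma dist_mono_coords {p q p' q' : ℝ × (Fin m → ℝ)}
    (h1 : dist p.1 q.1 ≤ dist p'.1 q'.1)
    (h2 : ∀ i, dist (p.2 i) (q.2 i) ≤ dist (p'.2 i) (q'.2 i)) :
    dist p q ≤ dist p' q' := by
  rw [Prod.dist_eq]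
  refine max_le (h1.trans ?_) ?_
  · rw [Prod.dist_eq]; exact le_max_left _ _
  · rw [dist_pi_le_iff dist_nonneg]
    intro i
    refine (h2 i).trans ?_
    exact le_trans (dist_le_pi_dist p'.2 q'.2 i) (by rw [Prod.dist_eq]; exact le_max_right _ _)

/-- finite family upper bound -/
lemma exists_bound {ι : Type*} [Finite ι] (f : ι → ℝ) : ∃ M, 0 ≤ M ∧ ∀ i, f i ≤ M := by
  obtain ⟨M, hM⟩ := (Set.finite_range f).bddAbove
  exact ⟨max M 0, le_max_right _ _, fun i => le_trans (hM ⟨i, rfl⟩) (le_max_left _ _)⟩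

/-- usc bound on balls -/
lemma usc_bound {g : (Fin m → ℝ) → ℝ} (hg : UpperSemicontinuous g) (r : ℝ) :
    ∃ M, ∀ z : Fin m → ℝ, ‖z‖ ≤ r → g z ≤ M := by
  have hK : IsCompact (Metric.closedBall (0 : Fin m → ℝ) r) := isCompact_closedBall _ _
  have hopen : ∀ n : ℕ, IsOpen (g ⁻¹' Iio (n : ℝ)) :=
    fun n => upperSemicontinuous_iff_isOpen_preimage.mp hg _
  have hcover : Metric.closedBall (0 : Fin m → ℝ) r ⊆ ⋃ n : ℕ, g ⁻¹' Iio (n : ℝ) := by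
    intro z _
    obtain ⟨n, hn⟩ := exists_nat_gt (g z)
    exact mem_iUnion.mpr ⟨n, hn⟩
  obtain ⟨t, ht⟩ := hK.elim_finite_subcover _ hopen hcover
  refine ⟨((t.sup id : ℕ) : ℝ), fun z hz => ?_⟩
  have hzK : z ∈ Metric.closedBall (0 : Fin m → ℝ) r := by
    simpa [Metric.mem_closedBall, dist_eq_norm] using hz
  obtain ⟨n, hn, hgz⟩ := by simpa using ht hzK
  calc g z ≤ (n : ℝ) := le_of_lt hgz
    _ ≤ ((t.sup id : ℕ) : ℝ) := by exact_mod_cast Finset.le_sup (f := id) hn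

/-- interpolation bounds -/
lemma le_lerp {z a b t : ℝ} (h0 : 0 ≤ t) (h1 : t ≤ 1) (ha : z ≤ a) (hb : z ≤ b) :
    z ≤ a + t * (b - a) := by nlinarith

lemma lerp_le {z a b t : ℝ} (h0 : 0 ≤ t) (h1 : t ≤ 1) (ha : a ≤ z) (hb : b ≤ z) :
    a + t * (b - a) ≤ z := by nlinarith

lemma abs_lerp_le {a b t r : ℝ} (h0 : 0 ≤ t) (h1 : t ≤ 1) (ha : |a| ≤ r) (hb : |b| ≤ r) :
    |a + t * (b - a)| ≤ r := by
  rw [abs_le] at *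
  constructor <;> nlinarith [ha.1, ha.2, hb.1, hb.2]

lemma one_le_abs_fin_sub {j k : Fin N} (h : j ≠ k) : 1 ≤ |(j : ℝ) - (k : ℝ)| := by
  have hne : (j : ℤ) ≠ (k : ℤ) := by
    simp only [ne_eq, Int.natCast_inj]
    exact fun hh => h (Fin.ext hh)
  have := Int.one_le_abs (sub_ne_zero.mpr hne)
  calc (1:ℝ) = ((1:ℤ):ℝ) := by norm_num
    _ ≤ ((|(j:ℤ) - (k:ℤ)| : ℤ) : ℝ) := by exact_mod_cast this
    _ = |(j:ℝ) - (k:ℝ)| := by push_cast; ring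




lemma joined_seg {F : Set (Fin N → ℝ × (Fin m → ℝ))} {c₁ c₂ : Fin N → ℝ × (Fin m → ℝ)}
    (h : ∀ t : ℝ, 0 ≤ t → t ≤ 1 → (fun k => c₁ k + t • (c₂ k - c₁ k)) ∈ F) :
    JoinedIn F c₁ c₂ := by
  refine ⟨⟨⟨fun t => fun k => c₁ k + (t : ℝ) • (c₂ k - c₁ k), ?_⟩, ?_, ?_⟩, ?_⟩
  · exact continuous_pi fun k =>
      continuous_const.add (continuous_subtype_val.smul continuous_const)
  · ext k : 1
    show c₁ k + ((0:unitInterval) : ℝ) • (c₂ k - c₁ k) = c₁ k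
    norm_num
  · ext k : 1
    show c₁ k + ((1:unitInterval) : ℝ) • (c₂ k - c₁ k) = c₂ k
    norm_num
  · intro t
    exact h t t.2.1 t.2.2

lemma seg_update {F : Set (Fin N → ℝ × (Fin m → ℝ))} (c : Fin N → ℝ × (Fin m → ℝ))
    (k : Fin N) (pt : ℝ × (Fin m → ℝ))
    (h : ∀ t : ℝ, 0 ≤ t → t ≤ 1 → Function.update c k (c k + t • (pt - c k)) ∈ F) :
    JoinedIn F c (Function.update c k pt) := by
  apply joined_seg
  intro t h0 h1
  convert h t h0 h1 using 1
  funext j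
  by_cases hj : j = k
  · subst hj; simp
  · simp [Function.update_of_ne hj]

lemma onebyone {F : Set (Fin N → ℝ × (Fin m → ℝ))} (old nw : Fin N → ℝ × (Fin m → ℝ))
    (hold : old ∈ F)
    (h : ∀ c : Fin N → ℝ × (Fin m → ℝ), (∀ j, c j = old j ∨ c j = nw j) → ∀ k : Fin N,
      ∀ t : ℝ, 0 ≤ t → t ≤ 1 → Function.update c k (old k + t • (nw k - old k)) ∈ F) :
    JoinedIn F old nw := by
  classical
  set step : ℕ → (Fin N → ℝ × (Fin m → ℝ)) :=
    fun n j => if (j : ℕ) < n then nw j else old j with hstepdef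
  have hdich : ∀ n j, step n j = old j ∨ step n j = nw j := by
    intro n j
    by_cases hj : (j : ℕ) < n <;> simp [hstepdef, hj]
  have hstep : ∀ n, JoinedIn F old (step n) := by
    intro n
    induction n with
    | zero =>
      have : step 0 = old := by funext j; simp [hstepdef]
      rw [this]; exact JoinedIn.refl hold
    | succ n ih =>
      by_cases hn : n < N
      · refine ih.trans ?_
        have keq : step (n+1) = Function.update (step n) ⟨n, hn⟩ (nw ⟨n, hn⟩) := by
          funext j
          by_cases hj : j = (⟨n, hn⟩ : Fin N)
          · subst hj; simp [hstepdef]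
          · have hj' : (j : ℕ) ≠ n := fun hh => hj (Fin.ext hh)
            have : (j : ℕ) < n + 1 ↔ (j : ℕ) < n := by omega
            simp [hstepdef, Function.update_of_ne hj, this]
        rw [keq]
        apply seg_update
        intro t h0 h1
        have hsn : step n ⟨n, hn⟩ = old ⟨n, hn⟩ := by simp [hstepdef]
        rw [hsn]
        exact h (step n) (hdich n) ⟨n, hn⟩ t h0 h1
      · have : step (n+1) = step n := by
          funext j
          have hj : (j : ℕ) < n := by omega
          have hj1 : (j : ℕ) < n + 1 := by omega
          simp [hstepdef, hj, hj1]
        rw [this]; exact ih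
  have hfin : step N = nw := by
    funext j; simp [hstepdef, j.2]
  rw [← hfin]; exact hstep N




lemma mem_dom_of {g : (Fin m → ℝ) → ℝ} {S : Fin N → Set (ℝ × (Fin m → ℝ))}
    (ρ M R : ℝ)
    (hρS : ∀ k, ∀ s ∈ S k, ‖s‖ ≤ ρ)
    (hM : ∀ z : Fin m → ℝ, ‖z‖ ≤ R + ρ → g z ≤ M)
    {x : Fin N → ℝ × (Fin m → ℝ)}
    (h1 : ∀ k, M + ρ < (x k).1) (h2 : ∀ k, ‖(x k).2‖ ≤ R)
    (h3 : ∀ j k, j ≠ k → 2 * ρ < dist (x j) (x k)) : x ∈ dom g S := by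
  rw [mem_dom_iff]
  constructor
  · intro k a ha
    have hna : ‖a‖ ≤ ρ := hρS k a ha
    have ha1 : |a.1| ≤ ρ := le_trans (norm_fst_le a) hna
    have ha2 : ‖a.2‖ ≤ ρ := le_trans (norm_snd_le a) hna
    have hsnd : (a + x k).2 = a.2 + (x k).2 := rfl
    have hfst : (a + x k).1 = a.1 + (x k).1 := rfl
    have hb : ‖(a + x k).2‖ ≤ R + ρ := by
      rw [hsnd]
      calc ‖a.2 + (x k).2‖ ≤ ‖a.2‖ + ‖(x k).2‖ := norm_add_le _ _
        _ ≤ ρ + R := add_le_add ha2 (h2 k)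
        _ = R + ρ := add_comm _ _
    have := hM _ hb
    have h1' := h1 k
    have := abs_le.mp ha1
    rw [hfst]
    linarith [hM _ hb]
  · intro j k hjk a ha b hb hab
    have hd : x j - x k = b - a := by
      have := congrArg (fun p => p - (a + x k)) hab
      calc x j - x k = a + x j - (a + x k) := by abel
        _ = b + x k - (a + x k) := this
        _ = b - a := by abel
    have : dist (x j) (x k) ≤ 2 * ρ := by
      rw [dist_eq_norm, hd]
      calc ‖b - a‖ ≤ ‖b‖ + ‖a‖ := norm_sub_le _ _
        _ ≤ ρ + ρ := add_le_add (hρS k b hb) (hρS j a ha)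
        _ = 2 * ρ := by ring
    exact absurd this (not_le.mpr (h3 j k hjk))




lemma evac (g : (Fin m → ℝ) → ℝ) (S : Fin N → Set (ℝ × (Fin m → ℝ)))
    (i₀ : Fin m) (ρ δ X₀ X R M Z : ℝ)
    (hρS : ∀ k, ∀ s ∈ S k, ‖s‖ ≤ ρ)
    (hM : ∀ z : Fin m → ℝ, ‖z‖ ≤ R + ρ → g z ≤ M)
    (hρ0 : 0 ≤ ρ) (hδ : δ = 2*ρ + 1)
    (hZ : Z = M + ρ + 1)
    (hX : X = X₀ + δ) (hX₀0 : 0 ≤ X₀)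
    (hXN : X + (N:ℝ)*δ ≤ R) :
    ∀ (n : ℕ) (F : Finset (Fin N)), F.card = n → ∀ (c : Fin N → ℝ × (Fin m → ℝ)),
    (∀ j k, j ≠ k → δ ≤ dist (c j) (c k)) →
    (∀ k, Z ≤ (c k).1) →
    (∀ k, ‖(c k).2‖ ≤ R) →
    (∀ k ∈ F, (c k).2 i₀ ≤ X₀) →
    (∀ k ∉ F, X + ((n:ℝ)+1)*δ ≤ (c k).2 i₀ ∧ (c k).2 i₀ ≤ X + (N:ℝ)*δ) →
    (∀ j ∉ F, ∀ k ∉ F, j ≠ k → δ ≤ |(c j).2 i₀ - (c k).2 i₀|) →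
    ∃ c', JoinedIn (dom g S) c c' ∧
      (∀ j k, j ≠ k → δ ≤ dist (c' j) (c' k)) ∧
      (∀ k, (c' k).1 = (c k).1) ∧
      (∀ k, ‖(c' k).2‖ ≤ R) ∧
      (∀ k, X ≤ (c' k).2 i₀ ∧ (c' k).2 i₀ ≤ X + (N:ℝ)*δ) ∧
      (∀ j k, j ≠ k → δ ≤ |(c' j).2 i₀ - (c' k).2 i₀|) := by
  have hδ0 : 0 < δ := by rw [hδ]; linarith
  have hδρ : 2*ρ < δ := by rw [hδ]; linarith
  have hX0 : 0 ≤ X := by rw [hX]; linarith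
  have hR0 : 0 ≤ R := le_trans (by positivity) hXN
  intro n
  induction n with
  | zero =>
    intro F hF c h1 h2 h3 h4 h5 h6
    have hFe : F = ∅ := Finset.card_eq_zero.mp hF
    subst hFe
    have hcmem : c ∈ dom g S := by
      refine mem_dom_of ρ M R hρS hM ?_ h3 (fun j k hjk => lt_of_lt_of_le hδρ (h1 j k hjk))
      intro k
      have := h2 k; rw [hZ] at this; linarith
    refine ⟨c, JoinedIn.refl hcmem, h1, fun k => rfl, h3, ?_, ?_⟩
    · intro k
      have := h5 k (Finset.notMem_empty k)
      constructor
      · nlinarith [this.1, hδ0.le]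
      · exact this.2
    · intro j k hjk
      exact h6 j (Finset.notMem_empty j) k (Finset.notMem_empty k) hjk
  | succ n ih =>
    intro F hF c h1 h2 h3 h4 h5 h6
    classical
    have hFne : F.Nonempty := Finset.card_pos.mp (by omega)
    obtain ⟨k₀, hk₀F, hk₀max⟩ := Finset.exists_max_image F (fun k => (c k).2 i₀) hFne
    set L : ℝ := X + ((n:ℝ)+1)*δ with hL
    set lane₀ : ℝ := (c k₀).2 i₀ with hlane₀
    have hcardN : (n:ℝ) + 1 ≤ (N:ℝ) := by
      have : F.card ≤ N := le_trans (Finset.card_le_univ F) (by simp)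
      exact_mod_cast by omega
    have hlane₀X₀ : lane₀ ≤ X₀ := h4 k₀ hk₀F
    have hXL : X ≤ L := by rw [hL]; nlinarith
    have hlane₀L : lane₀ ≤ L := by nlinarith
    have hLN : L ≤ X + (N:ℝ)*δ := by rw [hL]; nlinarith
    have habs_le_R : ∀ k i, |(c k).2 i| ≤ R := by
      intro k i
      calc |(c k).2 i| = ‖(c k).2 i‖ := rfl
        _ ≤ ‖(c k).2‖ := norm_le_pi_norm _ i
        _ ≤ R := h3 k
    have hLR : |L| ≤ R := by
      rw [abs_of_nonneg (le_trans hX0 hXL)]; linarith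
    set np : ℝ × (Fin m → ℝ) := ((c k₀).1, Function.update (c k₀).2 i₀ L) with hnp
    -- facts about lerped point
    have hptfst : ∀ t : ℝ, (c k₀ + t • (np - c k₀)).1 = (c k₀).1 := by
      intro t
      have : (np - c k₀).1 = 0 := by simp [hnp]
      show (c k₀).1 + t • (np - c k₀).1 = (c k₀).1
      rw [this]; simp
    have hptsnd : ∀ t : ℝ, ∀ i, i ≠ i₀ → (c k₀ + t • (np - c k₀)).2 i = (c k₀).2 i := by
      intro t i hi
      show (c k₀).2 i + t • (np - c k₀).2 i = (c k₀).2 i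
      have : (np - c k₀).2 i = 0 := by
        show np.2 i - (c k₀).2 i = 0
        simp [hnp, Function.update_of_ne hi]
      rw [this]; simp
    have hptlane : ∀ t : ℝ, (c k₀ + t • (np - c k₀)).2 i₀ = lane₀ + t * (L - lane₀) := by
      intro t
      show (c k₀).2 i₀ + t • (np - c k₀).2 i₀ = lane₀ + t * (L - lane₀)
      have : (np - c k₀).2 i₀ = L - lane₀ := by
        show np.2 i₀ - (c k₀).2 i₀ = L - lane₀
        simp [hnp, hlane₀]
      rw [this]; simp [smul_eq_mul, hlane₀]
    have hlane_mono : ∀ t : ℝ, 0 ≤ t → lane₀ ≤ lane₀ + t * (L - lane₀) := by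
      intro t ht; nlinarith
    have hlane_le_L : ∀ t : ℝ, 0 ≤ t → t ≤ 1 → lane₀ + t * (L - lane₀) ≤ L := by
      intro t ht ht1; nlinarith
    -- distance from moving point to others stays ≥ δ
    have hdistmov : ∀ t : ℝ, 0 ≤ t → t ≤ 1 → ∀ j, j ≠ k₀ →
        δ ≤ dist (c k₀ + t • (np - c k₀)) (c j) := by
      intro t ht ht1 j hj
      by_cases hjF : j ∈ F
      · refine le_trans (h1 k₀ j (Ne.symm hj)) ?_
        refine dist_mono_coords (le_of_eq (by rw [hptfst t])) ?_
        intro i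
        by_cases hi : i = i₀
        · subst hi
          rw [hptlane t]
          have hjlane : (c j).2 i ≤ lane₀ := hk₀max j hjF
          rw [Real.dist_eq, Real.dist_eq]
          rw [abs_of_nonneg (by linarith), abs_of_nonneg (by nlinarith [hlane_mono t ht])]
          nlinarith
        · rw [hptsnd t i hi]
      · have hjlane : L + δ ≤ (c j).2 i₀ := by
          have h5' := (h5 j hjF).1
          push_cast at h5'
          rw [hL]
          linarith
        refine le_trans ?_ (coord_le_dist (c k₀ + t • (np - c k₀)) (c j) i₀)
        rw [hptlane t]
        have h2' : lane₀ + t * (L - lane₀) ≤ L := hlane_le_L t ht ht1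
        rw [abs_sub_comm, abs_of_nonneg (by linarith)]
        linarith
    -- all configs along the segment are in dom
    have hsegmem : ∀ t : ℝ, 0 ≤ t → t ≤ 1 →
        Function.update c k₀ (c k₀ + t • (np - c k₀)) ∈ dom g S := by
      intro t ht ht1
      refine mem_dom_of ρ M R hρS hM ?_ ?_ ?_
      · intro k
        by_cases hk : k = k₀
        · rw [hk, Function.update_self, hptfst t]
          have := h2 k₀; rw [hZ] at this; linarith
        · rw [Function.update_of_ne hk]
          have := h2 k; rw [hZ] at this; linarith
      · intro k
        by_cases hk : k = k₀
        · rw [hk, Function.update_self]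
          rw [pi_norm_le_iff_of_nonneg hR0]
          intro i
          by_cases hi : i = i₀
          · rw [hi, hptlane t]
            exact abs_lerp_le ht ht1 (habs_le_R k₀ i₀) hLR
          · rw [hptsnd t i hi]
            exact habs_le_R k₀ i
        · rw [Function.update_of_ne hk]
          exact h3 k
      · intro j k hjk
        by_cases hj : j = k₀
        · have hkk : k ≠ k₀ := fun hh => hjk (hj.trans hh.symm)
          rw [hj, Function.update_self, Function.update_of_ne hkk]
          exact lt_of_lt_of_le hδρ (hdistmov t ht ht1 k hkk)
        · rw [Function.update_of_ne hj]
          by_cases hk : k = k₀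
          · rw [hk, Function.update_self, dist_comm]
            exact lt_of_lt_of_le hδρ (hdistmov t ht ht1 j hj)
          · rw [Function.update_of_ne hk]
            exact lt_of_lt_of_le hδρ (h1 j k hjk)
    have hseg : JoinedIn (dom g S) c (Function.update c k₀ np) :=
      seg_update c k₀ np hsegmem
    -- apply the induction hypothesis to the updated configuration
    set c₁ : Fin N → ℝ × (Fin m → ℝ) := Function.update c k₀ np with hc₁
    have hc₁fst : ∀ k, (c₁ k).1 = (c k).1 := by
      intro k
      by_cases hk : k = k₀
      · rw [hk, hc₁, Function.update_self, hnp]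
      · rw [hc₁, Function.update_of_ne hk]
    have hc₁lane : (c₁ k₀).2 i₀ = L := by
      rw [hc₁, Function.update_self, hnp]
      simp
    have hc₁other : ∀ k, k ≠ k₀ → c₁ k = c k := by
      intro k hk; rw [hc₁, Function.update_of_ne hk]
    have hnpdist : ∀ j, j ≠ k₀ → δ ≤ dist (c₁ k₀) (c₁ j) := by
      intro j hj
      rw [hc₁other j hj]
      have : c₁ k₀ = c k₀ + (1:ℝ) • (np - c k₀) := by
        rw [hc₁, Function.update_self]; simp
      rw [this]
      exact hdistmov 1 zero_le_one le_rfl j hj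
    have ihres := ih (F.erase k₀) (by rw [Finset.card_erase_of_mem hk₀F, hF]; omega) c₁
      ?_ ?_ ?_ ?_ ?_ ?_
    · obtain ⟨c', hjoin, hc'1, hc'2, hc'3, hc'4, hc'5⟩ := ihres
      refine ⟨c', hseg.trans hjoin, hc'1, fun k => ?_, hc'3, hc'4, hc'5⟩
      rw [hc'2 k, hc₁fst k]
    -- the six hypotheses for the IH
    · intro j k hjk
      by_cases hj : j = k₀
      · have hkk : k ≠ k₀ := fun hh => hjk (hj.trans hh.symm)
        rw [hj]
        exact hnpdist k hkk
      · by_cases hk : k = k₀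
        · rw [hk, dist_comm]; exact hnpdist j hj
        · rw [hc₁other j hj, hc₁other k hk]; exact h1 j k hjk
    · intro k; rw [hc₁fst k]; exact h2 k
    · intro k
      by_cases hk : k = k₀
      · rw [hk, hc₁, Function.update_self]
        rw [pi_norm_le_iff_of_nonneg hR0]
        intro i
        by_cases hi : i = i₀
        · have hnpl : np.2 i = L := by rw [hi, hnp]; simp
          rw [hnpl]
          exact hLR
        · have hnpl : np.2 i = (c k₀).2 i := by rw [hnp]; simp [Function.update_of_ne hi]
          rw [hnpl]
          exact habs_le_R k₀ i
      · rw [hc₁other k hk]; exact h3 k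
    · intro k hk
      have hkk₀ : k ≠ k₀ := fun hh => (Finset.notMem_erase k₀ F) (hh ▸ hk)
      rw [hc₁other k hkk₀]
      exact h4 k (Finset.mem_of_mem_erase hk)
    · intro k hk
      by_cases hkk₀ : k = k₀
      · rw [hkk₀, hc₁lane]
        exact ⟨le_of_eq (by push_cast; rw [hL]), hLN⟩
      · have hkF : k ∉ F := by
          intro hkF
          exact hk (Finset.mem_erase.mpr ⟨hkk₀, hkF⟩)
        rw [hc₁other k hkk₀]
        refine ⟨?_, (h5 k hkF).2⟩
        have h5' := (h5 k hkF).1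
        push_cast at h5' ⊢
        linarith
    · intro j hj k hk hjk
      by_cases hjj : j = k₀
      · have hkk : k ≠ k₀ := fun hh => hjk (hjj.trans hh.symm)
        have hkF : k ∉ F := fun h => hk (Finset.mem_erase.mpr ⟨hkk, h⟩)
        have h5' := (h5 k hkF).1
        push_cast at h5'
        have h5'' : L + δ ≤ (c k).2 i₀ := by rw [hL]; linarith
        rw [hjj, hc₁lane, hc₁other k hkk]
        rw [abs_sub_comm, abs_of_nonneg (by linarith)]
        linarith
      · by_cases hkk : k = k₀
        · have hjF : j ∉ F := fun h => hj (Finset.mem_erase.mpr ⟨hjj, h⟩)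
          have h5' := (h5 j hjF).1
          push_cast at h5'
          have h5'' : L + δ ≤ (c j).2 i₀ := by rw [hL]; linarith
          rw [hkk, hc₁lane, hc₁other j hjj]
          rw [abs_of_nonneg (by linarith)]
          linarith
        · have hjF : j ∉ F := fun h => hj (Finset.mem_erase.mpr ⟨hjj, h⟩)
          have hkF : k ∉ F := fun h => hk (Finset.mem_erase.mpr ⟨hkk, h⟩)
          rw [hc₁other j hjj, hc₁other k hkk]
          exact h6 j hjF k hkF hjk




lemma lerp_fst (p q : ℝ × (Fin m → ℝ)) (t : ℝ) :
    (p + t • (q - p)).1 = p.1 + t * (q.1 - p.1) := rfl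

lemma lerp_coord (p q : ℝ × (Fin m → ℝ)) (t : ℝ) (i : Fin m) :
    (p + t • (q - p)).2 i = p.2 i + t * (q.2 i - p.2 i) := rfl

lemma stages (g : (Fin m → ℝ) → ℝ) (S : Fin N → Set (ℝ × (Fin m → ℝ)))
    (i₀ : Fin m) (ρ δ X R M Z : ℝ)
    (hρS : ∀ k, ∀ s ∈ S k, ‖s‖ ≤ ρ)
    (hM : ∀ z : Fin m → ℝ, ‖z‖ ≤ R + ρ → g z ≤ M)
    (hρ0 : 0 ≤ ρ) (hδ : δ = 2*ρ + 1)
    (hZ : Z = M + ρ + 1)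
    (hX0 : 0 ≤ X)
    (hXN : X + (N:ℝ)*δ ≤ R)
    (u3 : Fin N → ℝ × (Fin m → ℝ))
    (hd : ∀ j k, j ≠ k → δ ≤ dist (u3 j) (u3 k))
    (hh : ∀ k, Z ≤ (u3 k).1)
    (hn : ∀ k, ‖(u3 k).2‖ ≤ R)
    (hlane : ∀ k, X ≤ (u3 k).2 i₀ ∧ (u3 k).2 i₀ ≤ X + (N:ℝ)*δ)
    (hlanesep : ∀ j k, j ≠ k → δ ≤ |(u3 j).2 i₀ - (u3 k).2 i₀|) :
    JoinedIn (dom g S) u3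
      (fun k => ((Z:ℝ), fun i => if i = i₀ then ((k:ℕ)+1)*δ else 0)) := by
  have hδ0 : 0 < δ := by rw [hδ]; linarith
  have hδρ : 2*ρ < δ := by rw [hδ]; linarith
  have hR0 : 0 ≤ R := le_trans (by positivity) hXN
  have hZM : M + ρ < Z := by rw [hZ]; linarith
  have habsR : ∀ k i, |(u3 k).2 i| ≤ R := by
    intro k i
    calc |(u3 k).2 i| = ‖(u3 k).2 i‖ := rfl
      _ ≤ ‖(u3 k).2‖ := norm_le_pi_norm _ i
      _ ≤ R := hn k
  have hslotR : ∀ k : Fin N, |((k:ℕ)+1)*δ| ≤ R := by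
    intro k
    have hk : ((k:ℕ):ℝ) + 1 ≤ (N:ℝ) := by exact_mod_cast k.isLt
    rw [abs_of_nonneg (by positivity)]
    nlinarith
  have hlaneabsR : ∀ k, |(u3 k).2 i₀| ≤ R := fun k => habsR k i₀
  have hheightR : ∀ k : Fin N, Z ≤ Z + ((k:ℕ)+1)*δ := by
    intro k; nlinarith [hδ0.le]
  -- stage 3 target
  set v4 : Fin N → ℝ × (Fin m → ℝ) :=
    fun k => ((Z + ((k:ℕ)+1)*δ : ℝ), fun i => if i = i₀ then (u3 k).2 i₀ else 0) with hv4
  -- stage 4 target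
  set v5 : Fin N → ℝ × (Fin m → ℝ) :=
    fun k => ((Z + ((k:ℕ)+1)*δ : ℝ), fun i => if i = i₀ then ((k:ℕ)+1)*δ else 0) with hv5
  -- stage 5 target
  set v6 : Fin N → ℝ × (Fin m → ℝ) :=
    fun k => ((Z:ℝ), fun i => if i = i₀ then ((k:ℕ)+1)*δ else 0) with hv6
  have hu3mem : u3 ∈ dom g S :=
    mem_dom_of ρ M R hρS hM (fun k => lt_of_lt_of_le hZM (hh k)) hn
      (fun j k hjk => lt_of_lt_of_le hδρ (hd j k hjk))
  -- STAGE 3 ---------------------------------------------------------------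
  have stage3 : JoinedIn (dom g S) u3 v4 := by
    apply onebyone u3 v4 hu3mem
    intro c hc k t ht ht1
    -- facts about the dichotomous configuration
    have hcfst : ∀ j, Z ≤ (c j).1 := by
      intro j
      rcases hc j with h | h <;> rw [h]
      · exact hh j
      · exact hheightR j
    have hccoord : ∀ j i, |(c j).2 i| ≤ R := by
      intro j i
      rcases hc j with h | h <;> rw [h]
      · exact habsR j i
      · rw [hv4]
        by_cases hi : i = i₀
        · simp only [hi, if_pos rfl]
          exact hlaneabsR j
        · simp only [if_neg hi]
          simpa using hR0
    have hclane : ∀ j, (c j).2 i₀ = (u3 j).2 i₀ := by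
      intro j
      rcases hc j with h | h <;> rw [h]
      · rw [hv4]; simp
    refine mem_dom_of ρ M R hρS hM ?_ ?_ ?_
    · intro k'
      by_cases hk : k' = k
      · rw [hk, Function.update_self, lerp_fst]
        refine lt_of_lt_of_le hZM ?_
        exact le_lerp ht ht1 (hh k) (hheightR k)
      · rw [Function.update_of_ne hk]
        exact lt_of_lt_of_le hZM (hcfst k')
    · intro k'
      by_cases hk : k' = k
      · rw [hk, Function.update_self]
        rw [pi_norm_le_iff_of_nonneg hR0]
        intro i
        rw [Real.norm_eq_abs, lerp_coord]
        refine abs_lerp_le ht ht1 (habsR k i) ?_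
        rw [hv4]
        by_cases hi : i = i₀
        · simp only [hi, if_pos rfl]; exact hlaneabsR k
        · simp only [if_neg hi]; simpa using hR0
      · rw [Function.update_of_ne hk]
        rw [pi_norm_le_iff_of_nonneg hR0]
        intro i
        rw [Real.norm_eq_abs]
        exact hccoord k' i
    · intro j l hjl
      have hlanej : ∀ j', (Function.update c k (u3 k + t • (v4 k - u3 k)) j').2 i₀
          = (u3 j').2 i₀ := by
        intro j'
        by_cases hj' : j' = k
        · rw [hj', Function.update_self, lerp_coord]
          have : (v4 k).2 i₀ = (u3 k).2 i₀ := by rw [hv4]; simp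
          rw [this]; ring
        · rw [Function.update_of_ne hj']
          exact hclane j'
      refine lt_of_lt_of_le hδρ ?_
      refine le_trans ?_ (coord_le_dist _ _ i₀)
      rw [hlanej j, hlanej l]
      exact hlanesep j l hjl
  -- STAGE 4 ---------------------------------------------------------------
  -- STAGE 4 ---------------------------------------------------------------
  have hv4fst : ∀ k : Fin N, (v4 k).1 = Z + ((k:ℕ)+1)*δ := fun k => by rw [hv4]
  have hv5fst : ∀ k : Fin N, (v5 k).1 = Z + ((k:ℕ)+1)*δ := fun k => by rw [hv5]
  have hfstsep : ∀ j l : Fin N, j ≠ l →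
      δ ≤ |(Z + ((j:ℕ)+1)*δ) - (Z + ((l:ℕ)+1)*δ)| := by
    intro j l hjl
    have h1 : (Z + ((j:ℕ)+1)*δ) - (Z + ((l:ℕ)+1)*δ) = ((j:ℝ) - (l:ℝ)) * δ := by
      push_cast; ring
    rw [h1, abs_mul, abs_of_nonneg hδ0.le]
    nlinarith [one_le_abs_fin_sub hjl]
  have hv4mem : v4 ∈ dom g S := by
    refine mem_dom_of ρ M R hρS hM ?_ ?_ ?_
    · intro k; rw [hv4]
      exact lt_of_lt_of_le hZM (hheightR k)
    · intro k; rw [hv4]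
      rw [pi_norm_le_iff_of_nonneg hR0]
      intro i
      rw [Real.norm_eq_abs]
      by_cases hi : i = i₀
      · simp only [hi, if_pos rfl]; exact hlaneabsR k
      · simp only [if_neg hi]; simpa using hR0
    · intro j l hjl
      refine lt_of_lt_of_le hδρ (le_trans ?_ (coord_le_dist _ _ i₀))
      have e1 : (v4 j).2 i₀ = (u3 j).2 i₀ := by rw [hv4]; simp
      have e2 : (v4 l).2 i₀ = (u3 l).2 i₀ := by rw [hv4]; simp
      rw [e1, e2]
      exact hlanesep j l hjl
  have stage4 : JoinedIn (dom g S) v4 v5 := by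
    apply onebyone v4 v5 hv4mem
    intro c hc k t ht ht1
    have hcfst : ∀ j : Fin N, (c j).1 = Z + ((j:ℕ)+1)*δ := by
      intro j
      rcases hc j with h | h <;> rw [h]
    have hccoord : ∀ j i, |(c j).2 i| ≤ R := by
      intro j i
      rcases hc j with h | h <;> rw [h]
      · rw [hv4]
        by_cases hi : i = i₀
        · simp only [hi, if_pos rfl]; exact hlaneabsR j
        · simp only [if_neg hi]; simpa using hR0
      · rw [hv5]
        by_cases hi : i = i₀
        · simp only [hi, if_pos rfl]; exact hslotR j
        · simp only [if_neg hi]; simpa using hR0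
    have hupfst : ∀ j : Fin N, (Function.update c k (v4 k + t • (v5 k - v4 k)) j).1
        = Z + ((j:ℕ)+1)*δ := by
      intro j
      by_cases hj : j = k
      · rw [hj, Function.update_self, lerp_fst, hv4fst]; ring
      · rw [Function.update_of_ne hj]; exact hcfst j
    refine mem_dom_of ρ M R hρS hM ?_ ?_ ?_
    · intro k'
      rw [hupfst k']
      exact lt_of_lt_of_le hZM (hheightR k')
    · intro k'
      by_cases hk : k' = k
      · rw [hk, Function.update_self]
        rw [pi_norm_le_iff_of_nonneg hR0]
        intro i
        rw [Real.norm_eq_abs, lerp_coord]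
        refine abs_lerp_le ht ht1 ?_ ?_
        · rw [hv4]
          by_cases hi : i = i₀
          · simp only [hi, if_pos rfl]; exact hlaneabsR k
          · simp only [if_neg hi]; simpa using hR0
        · rw [hv5]
          by_cases hi : i = i₀
          · simp only [hi, if_pos rfl]; exact hslotR k
          · simp only [if_neg hi]; simpa using hR0
      · rw [Function.update_of_ne hk]
        rw [pi_norm_le_iff_of_nonneg hR0]
        intro i
        rw [Real.norm_eq_abs]
        exact hccoord k' i
    · intro j l hjl
      refine lt_of_lt_of_le hδρ (le_trans ?_ (fst_le_dist _ _))
      rw [hupfst j, hupfst l]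
      exact hfstsep j l hjl
  -- STAGE 5 ---------------------------------------------------------------
  have hv5mem : v5 ∈ dom g S := by
    refine mem_dom_of ρ M R hρS hM ?_ ?_ ?_
    · intro k; rw [hv5]
      exact lt_of_lt_of_le hZM (hheightR k)
    · intro k; rw [hv5]
      rw [pi_norm_le_iff_of_nonneg hR0]
      intro i
      rw [Real.norm_eq_abs]
      by_cases hi : i = i₀
      · simp only [hi, if_pos rfl]; exact hslotR k
      · simp only [if_neg hi]; simpa using hR0
    · intro j l hjl
      refine lt_of_lt_of_le hδρ (le_trans ?_ (fst_le_dist _ _))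
      rw [hv5fst j, hv5fst l]
      exact hfstsep j l hjl
  have hslotsep : ∀ j l : Fin N, j ≠ l →
      δ ≤ |((j:ℕ)+1)*δ - (((l:ℕ)+1)*δ : ℝ)| := by
    intro j l hjl
    have h1 : (((j:ℕ):ℝ)+1)*δ - (((l:ℕ):ℝ)+1)*δ = ((j:ℝ) - (l:ℝ)) * δ := by
      push_cast; ring
    rw [h1, abs_mul, abs_of_nonneg hδ0.le]
    nlinarith [one_le_abs_fin_sub hjl]
  have stage5 : JoinedIn (dom g S) v5 v6 := by
    apply onebyone v5 v6 hv5mem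
    intro c hc k t ht ht1
    have hcsnd : ∀ j : Fin N, (c j).2 = fun i => if i = i₀ then ((j:ℕ)+1)*δ else 0 := by
      intro j
      rcases hc j with h | h <;> rw [h]
    have hupsnd : ∀ j : Fin N, (Function.update c k (v5 k + t • (v6 k - v5 k)) j).2 i₀
        = ((j:ℕ)+1)*δ := by
      intro j
      by_cases hj : j = k
      · rw [hj, Function.update_self, lerp_coord]
        have e1 : (v5 k).2 i₀ = ((k:ℕ)+1)*δ := by rw [hv5]; simp
        rw [e1]; ring
      · rw [Function.update_of_ne hj, hcsnd j]; simp
    refine mem_dom_of ρ M R hρS hM ?_ ?_ ?_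
    · intro k'
      by_cases hk : k' = k
      · rw [hk, Function.update_self, lerp_fst]
        have e1 : (v5 k).1 = Z + ((k:ℕ)+1)*δ := hv5fst k
        have e2 : (v6 k).1 = Z := by rw [hv6]
        rw [e1, e2]
        refine lt_of_lt_of_le hZM ?_
        exact le_lerp ht ht1 (hheightR k) le_rfl
      · rw [Function.update_of_ne hk]
        rcases hc k' with h | h <;> rw [h]
        · rw [hv5fst k']
          exact lt_of_lt_of_le hZM (hheightR k')
        · rw [hv6]
          exact lt_of_lt_of_le hZM le_rfl
    · intro k'
      by_cases hk : k' = k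
      · rw [hk, Function.update_self]
        rw [pi_norm_le_iff_of_nonneg hR0]
        intro i
        rw [Real.norm_eq_abs, lerp_coord]
        refine abs_lerp_le ht ht1 ?_ ?_
        · rw [hv5]
          by_cases hi : i = i₀
          · simp only [hi, if_pos rfl]; exact hslotR k
          · simp only [if_neg hi]; simpa using hR0
        · rw [hv6]
          by_cases hi : i = i₀
          · simp only [hi, if_pos rfl]; exact hslotR k
          · simp only [if_neg hi]; simpa using hR0
      · rw [Function.update_of_ne hk]
        rw [pi_norm_le_iff_of_nonneg hR0]
        intro i
        rw [Real.norm_eq_abs, hcsnd k']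
        by_cases hi : i = i₀
        · simp only [hi, if_pos rfl]; exact hslotR k'
        · simp only [if_neg hi]; simpa using hR0
    · intro j l hjl
      refine lt_of_lt_of_le hδρ (le_trans ?_ (coord_le_dist _ _ i₀))
      rw [hupsnd j, hupsnd l]
      exact hslotsep j l hjl
  exact (stage3.trans stage4).trans stage5




lemma side (g : (Fin m → ℝ) → ℝ) (S : Fin N → Set (ℝ × (Fin m → ℝ)))
    (i₀ : Fin m) (hSconvex : ∀ k, Convex ℝ (S k))
    (a : Fin N → ℝ × (Fin m → ℝ)) (ha : ∀ k, a k ∈ S k)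
    (ρ δ X₀ X R M Z T₀ T κ : ℝ)
    (hρ0 : 0 ≤ ρ) (hρS : ∀ k, ∀ s ∈ S k, ‖s‖ ≤ ρ)
    (hδ : δ = 2*ρ + 1)
    (hM : ∀ z : Fin m → ℝ, ‖z‖ ≤ R + ρ → g z ≤ M)
    (hZ : Z = M + ρ + 1)
    (hX : X = X₀ + δ) (hX₀0 : 0 ≤ X₀)
    (hXN : X + (N:ℝ)*δ ≤ R)
    (hX₀R : X₀ ≤ R)
    (u : Fin N → ℝ × (Fin m → ℝ)) (hu : u ∈ dom g S)
    (hT₀0 : 0 ≤ T₀) (hT₀Z : ∀ k, Z ≤ (u k).1 + T₀)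
    (hκ : ∀ k, 0 ≤ (u k).1 + (a k).1 + κ)
    (hT0 : 0 ≤ T)
    (hTsep : ∀ j k, j ≠ k → δ + dist (u j) (u k) ≤ T * dist (u j + a j) (u k + a k))
    (hX₀b : ∀ k, ‖(u k).2‖ + T * ‖(u k).2 + (a k).2‖ ≤ X₀) :
    JoinedIn (dom g S) u
      (fun k => ((Z:ℝ), fun i => if i = i₀ then ((k:ℕ)+1)*δ else 0)) := by
  have hδ0 : 0 < δ := by rw [hδ]; linarith
  obtain ⟨hu1, hu2⟩ := mem_dom_iff.mp hu
  set ve : ℝ × (Fin m → ℝ) := ((1:ℝ), (0 : Fin m → ℝ)) with hve0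
  have hve : ∀ (s : ℝ) (p : ℝ × (Fin m → ℝ)), p + s • ve = (p.1 + s, p.2) := by
    intro s p
    rw [hve0]
    ext
    · simp
    · simp
  set u₁ : Fin N → ℝ × (Fin m → ℝ) := fun k => u k + T₀ • ve with hu₁
  set w : Fin N → ℝ × (Fin m → ℝ) := fun k => (u k + a k) + κ • ve with hw
  set u₂ : Fin N → ℝ × (Fin m → ℝ) := fun k => u₁ k + T • w k with hu₂
  -- SEGMENT 0 : vertical lift
  have seg0 : JoinedIn (dom g S) u u₁ := by
    apply joined_seg
    intro t h0 h1
    have hconf : (fun k => u k + t • (u₁ k - u k)) = fun k => u k + (t*T₀) • ve := by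
      funext k
      rw [hu₁]
      simp only [add_sub_cancel_left, smul_smul]
    rw [hconf, mem_dom_iff]
    have htT : 0 ≤ t * T₀ := mul_nonneg h0 hT₀0
    constructor
    · intro k a' ha'
      have h := hu1 k a' ha'
      have heq : a' + (u k + (t * T₀) • ve) = ((a' + u k).1 + t*T₀, (a' + u k).2) := by
        rw [← add_assoc, hve]
      rw [heq]
      show g ((a' + u k).2) < (a' + u k).1 + t * T₀
      linarith
    · intro j k hjk a' ha' b' hb' heq
      apply hu2 j k hjk a' ha' b' hb'
      have heq' : (a' + u j) + (t*T₀) • ve = (b' + u k) + (t*T₀) • ve := by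
        rw [add_assoc, add_assoc]; exact heq
      exact add_right_cancel heq'
  -- coordinates of u₁ and w
  have hu₁fst : ∀ k, (u₁ k).1 = (u k).1 + T₀ := by
    intro k; rw [hu₁]; simp only; rw [hve]
  have hu₁snd : ∀ k, (u₁ k).2 = (u k).2 := by
    intro k; rw [hu₁]; simp only; rw [hve]
  have hwfst : ∀ k, (w k).1 = (u k).1 + (a k).1 + κ := by
    intro k; rw [hw]; simp only; rw [hve]; rfl
  have hwsnd : ∀ k, (w k).2 = (u k).2 + (a k).2 := by
    intro k; rw [hw]; simp only; rw [hve]; rfl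
  -- SEGMENT 1 : expansion
  have seg1mem : ∀ s : ℝ, 0 ≤ s → s ≤ T → (fun k => u₁ k + s • w k) ∈ dom g S := by
    intro s hs0 hsT
    rw [mem_dom_iff]
    constructor
    · intro k a' ha'
      have hη : ‖a'‖ ≤ ρ := hρS k a' ha'
      have hη1 : |a'.1| ≤ ρ := le_trans (norm_fst_le a') hη
      have hη2 : ‖a'.2‖ ≤ ρ := le_trans (norm_snd_le a') hη
      have hP1 : (a' + (u₁ k + s • w k)).1 = a'.1 + ((u k).1 + T₀ + s * ((u k).1 + (a k).1 + κ)) := by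
        show a'.1 + (u₁ k + s • w k).1 = _
        have : (u₁ k + s • w k).1 = (u₁ k).1 + s * (w k).1 := rfl
        rw [this, hu₁fst, hwfst]
      have hP2 : (a' + (u₁ k + s • w k)).2 = a'.2 + ((u k).2 + s • ((u k).2 + (a k).2)) := by
        show a'.2 + (u₁ k + s • w k).2 = _
        have : (u₁ k + s • w k).2 = (u₁ k).2 + s • (w k).2 := rfl
        rw [this, hu₁snd, hwsnd]
      have hnorm : ‖(a' + (u₁ k + s • w k)).2‖ ≤ R + ρ := by
        rw [hP2]
        have h1 : ‖s • ((u k).2 + (a k).2)‖ = s * ‖(u k).2 + (a k).2‖ := by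
          rw [norm_smul, Real.norm_eq_abs, abs_of_nonneg hs0]
        have h2 : s * ‖(u k).2 + (a k).2‖ ≤ T * ‖(u k).2 + (a k).2‖ :=
          mul_le_mul_of_nonneg_right hsT (norm_nonneg _)
        calc ‖a'.2 + ((u k).2 + s • ((u k).2 + (a k).2))‖
            ≤ ‖a'.2‖ + (‖(u k).2‖ + ‖s • ((u k).2 + (a k).2)‖) :=
              le_trans (norm_add_le _ _) (by gcongr; exact norm_add_le _ _)
          _ ≤ ρ + (‖(u k).2‖ + T * ‖(u k).2 + (a k).2‖) := by rw [h1]; gcongr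
          _ ≤ ρ + X₀ := by linarith [hX₀b k]
          _ ≤ R + ρ := by linarith [hX₀R]
      have hg := hM _ hnorm
      have hZk := hT₀Z k
      have hpos : 0 ≤ s * ((u k).1 + (a k).1 + κ) := mul_nonneg hs0 (hκ k)
      have : M < (a' + (u₁ k + s • w k)).1 := by
        rw [hP1, hZ] at *
        have := abs_le.mp hη1
        linarith
      exact lt_of_le_of_lt hg this
    · intro j k hjk a' ha' b' hb' heq
      -- convexity argument
      have hwj : u₁ j + s • w j = (u j + s • (u j + a j)) + (T₀ + s*κ) • ve := by
        rw [hu₁, hw]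
        simp only
        rw [smul_add, smul_add, smul_smul]
        module
      have hwk : u₁ k + s • w k = (u k + s • (u k + a k)) + (T₀ + s*κ) • ve := by
        rw [hu₁, hw]
        simp only
        rw [smul_add, smul_add, smul_smul]
        module
      have heq3 : a' + u j + s • (u j + a j) = b' + u k + s • (u k + a k) := by
        have h' : (a' + u j + s • (u j + a j)) + (T₀ + s*κ) • ve
            = (b' + u k + s • (u k + a k)) + (T₀ + s*κ) • ve := by
          rw [hwj, hwk] at heq
          calc (a' + u j + s • (u j + a j)) + (T₀ + s*κ) • ve
              = a' + ((u j + s • (u j + a j)) + (T₀ + s*κ) • ve) := by module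
            _ = b' + ((u k + s • (u k + a k)) + (T₀ + s*κ) • ve) := heq
            _ = (b' + u k + s • (u k + a k)) + (T₀ + s*κ) • ve := by module
        exact add_right_cancel h'
      have hs1 : (0:ℝ) < 1 + s := by linarith
      have hsum : (1+s)⁻¹ + s/(1+s) = 1 := by field_simp
      have hc1 : (1+s)⁻¹ • a' + (s/(1+s)) • a j ∈ S j :=
        hSconvex j ha' (ha j) (by positivity) (by positivity) hsum
      have hc2 : (1+s)⁻¹ • b' + (s/(1+s)) • a k ∈ S k :=
        hSconvex k hb' (ha k) (by positivity) (by positivity) hsum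
      have hscale : (1+s) • (((1+s)⁻¹ • a' + (s/(1+s)) • a j) + u j)
          = (1+s) • (((1+s)⁻¹ • b' + (s/(1+s)) • a k) + u k) := by
        have e2 : ∀ (p q r : ℝ × (Fin m → ℝ)),
            (1+s) • (((1+s)⁻¹ • p + (s/(1+s)) • q) + r) = p + r + s • (r + q) := by
          intro p q r
          match_scalars <;> field_simp
        rw [e2, e2]
        calc a' + u j + s • (u j + a j) = b' + u k + s • (u k + a k) := heq3
          _ = b' + u k + s • (u k + a k) := rfl
      have hkey := smul_right_injective (ℝ × (Fin m → ℝ)) (ne_of_gt hs1) hscale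
      exact hu2 j k hjk _ hc1 _ hc2 hkey
  have seg1 : JoinedIn (dom g S) u₁ u₂ := by
    apply joined_seg
    intro t h0 h1
    have hconf : (fun k => u₁ k + t • (u₂ k - u₁ k)) = fun k => u₁ k + (t*T) • w k := by
      funext k
      rw [hu₂]
      simp only [add_sub_cancel_left, smul_smul]
    rw [hconf]
    exact seg1mem (t*T) (mul_nonneg h0 hT0) (mul_le_of_le_one_left hT0 h1)
  -- properties of u₂
  have hu₂fst : ∀ k, (u₂ k).1 = (u k).1 + T₀ + T * ((u k).1 + (a k).1 + κ) := by
    intro k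
    rw [hu₂]
    show (u₁ k).1 + T * (w k).1 = _
    rw [hu₁fst, hwfst]
  have hu₂snd : ∀ k, (u₂ k).2 = (u k).2 + T • ((u k).2 + (a k).2) := by
    intro k
    rw [hu₂]
    show (u₁ k).2 + T • (w k).2 = _
    rw [hu₁snd, hwsnd]
  have hu₂Z : ∀ k, Z ≤ (u₂ k).1 := by
    intro k
    rw [hu₂fst]
    have := hT₀Z k
    have := mul_nonneg hT0 (hκ k)
    linarith
  have hu₂R : ∀ k, ‖(u₂ k).2‖ ≤ R := by
    intro k
    rw [hu₂snd]
    calc ‖(u k).2 + T • ((u k).2 + (a k).2)‖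
        ≤ ‖(u k).2‖ + ‖T • ((u k).2 + (a k).2)‖ := norm_add_le _ _
      _ = ‖(u k).2‖ + T * ‖(u k).2 + (a k).2‖ := by
          rw [norm_smul, Real.norm_eq_abs, abs_of_nonneg hT0]
      _ ≤ X₀ := hX₀b k
      _ ≤ R := hX₀R
  have hu₂lane : ∀ k, (u₂ k).2 i₀ ≤ X₀ := by
    intro k
    have h1 : |(u₂ k).2 i₀| ≤ ‖(u₂ k).2‖ := by
      calc |(u₂ k).2 i₀| = ‖(u₂ k).2 i₀‖ := rfl
        _ ≤ ‖(u₂ k).2‖ := norm_le_pi_norm _ i₀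
    have h2 : ‖(u₂ k).2‖ ≤ X₀ := by
      rw [hu₂snd]
      calc ‖(u k).2 + T • ((u k).2 + (a k).2)‖
          ≤ ‖(u k).2‖ + ‖T • ((u k).2 + (a k).2)‖ := norm_add_le _ _
        _ = ‖(u k).2‖ + T * ‖(u k).2 + (a k).2‖ := by
            rw [norm_smul, Real.norm_eq_abs, abs_of_nonneg hT0]
        _ ≤ X₀ := hX₀b k
    have := abs_le.mp (le_trans h1 h2)
    exact this.2
  have hu₂sep : ∀ j k, j ≠ k → δ ≤ dist (u₂ j) (u₂ k) := by
    intro j k hjk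
    have hdiff : u₂ j - u₂ k = (u j - u k) + T • ((u j + a j) - (u k + a k)) := by
      rw [hu₂, hu₁, hw]
      simp only
      module
    have hTq : ‖T • ((u j + a j) - (u k + a k))‖ = T * dist (u j + a j) (u k + a k) := by
      rw [norm_smul, Real.norm_eq_abs, abs_of_nonneg hT0, dist_eq_norm]
    have htri : ‖T • ((u j + a j) - (u k + a k))‖
        ≤ ‖(u j - u k) + T • ((u j + a j) - (u k + a k))‖ + ‖u j - u k‖ := by
      have hrw : T • ((u j + a j) - (u k + a k))
          = ((u j - u k) + T • ((u j + a j) - (u k + a k))) + (-(u j - u k)) := by abel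
      calc ‖T • ((u j + a j) - (u k + a k))‖
          = ‖((u j - u k) + T • ((u j + a j) - (u k + a k))) + (-(u j - u k))‖ := by rw [← hrw]
        _ ≤ ‖(u j - u k) + T • ((u j + a j) - (u k + a k))‖ + ‖-(u j - u k)‖ := norm_add_le _ _
        _ = ‖(u j - u k) + T • ((u j + a j) - (u k + a k))‖ + ‖u j - u k‖ := by rw [norm_neg]
    have hsep := hTsep j k hjk
    have hdist : dist (u₂ j) (u₂ k) = ‖(u j - u k) + T • ((u j + a j) - (u k + a k))‖ := by
      rw [dist_eq_norm, hdiff]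
    rw [hdist]
    have hujk : ‖u j - u k‖ = dist (u j) (u k) := (dist_eq_norm _ _).symm
    rw [hTq] at htri
    rw [hujk] at htri
    linarith
  -- apply evac
  obtain ⟨u₃, hjoin3, h3sep, h3fst, h3R, h3lane, h3lanesep⟩ :=
    evac g S i₀ ρ δ X₀ X R M Z hρS hM hρ0 hδ hZ hX hX₀0 hXN N Finset.univ
      (by simp) u₂ hu₂sep hu₂Z hu₂R (fun k _ => hu₂lane k)
      (fun k hk => absurd (Finset.mem_univ k) hk)
      (fun j hj => absurd (Finset.mem_univ j) hj)
  have h3Z : ∀ k, Z ≤ (u₃ k).1 := by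
    intro k; rw [h3fst k]; exact hu₂Z k
  have hX0 : 0 ≤ X := by rw [hX]; linarith
  have stage345 := stages g S i₀ ρ δ X R M Z hρS hM hρ0 hδ hZ hX0 hXN u₃
    h3sep h3Z h3R h3lane h3lanesep
  exact ((seg0.trans seg1).trans hjoin3).trans stage345




/-- existence of the expansion time for one side -/
lemma exists_T {g : (Fin m → ℝ) → ℝ} {S : Fin N → Set (ℝ × (Fin m → ℝ))}
    (a : Fin N → ℝ × (Fin m → ℝ)) (ha : ∀ k, a k ∈ S k) (δ : ℝ)
    {u : Fin N → ℝ × (Fin m → ℝ)} (hu : u ∈ dom g S) :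
    ∃ T, 0 ≤ T ∧ ∀ j k, j ≠ k → δ + dist (u j) (u k) ≤ T * dist (u j + a j) (u k + a k) := by
  obtain ⟨hu1, hu2⟩ := mem_dom_iff.mp hu
  obtain ⟨T, hT0, hT⟩ := exists_bound (fun p : Fin N × Fin N =>
    (δ + dist (u p.1) (u p.2)) / dist (u p.1 + a p.1) (u p.2 + a p.2))
  refine ⟨T, hT0, fun j k hjk => ?_⟩
  have hne : u j + a j ≠ u k + a k := by
    intro hh
    apply hu2 j k hjk (a j) (ha j) (a k) (ha k)
    rw [add_comm (a j), add_comm (a k)]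
    exact hh
  have hdpos : 0 < dist (u j + a j) (u k + a k) := dist_pos.mpr hne
  have := hT (j, k)
  rw [div_le_iff₀ hdpos] at this
  exact this

lemma main_assembly (hm : 1 ≤ m)
    (g : (Fin m → ℝ) → ℝ) (hg : UpperSemicontinuous g)
    (S : Fin N → Set (ℝ × (Fin m → ℝ)))
    (hSne : ∀ k, (S k).Nonempty)
    (hScompact : ∀ k, IsCompact (S k))
    (hSconvex : ∀ k, Convex ℝ (S k))
    (x : Fin N → ℝ × (Fin m → ℝ)) (hx : x ∈ dom g S)
    (y : Fin N → ℝ × (Fin m → ℝ)) (hy : y ∈ dom g S) :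
    JoinedIn (dom g S) x y := by
  classical
  set i₀ : Fin m := ⟨0, hm⟩ with hi₀
  set a : Fin N → ℝ × (Fin m → ℝ) := fun k => (hSne k).some with haa
  have ha : ∀ k, a k ∈ S k := fun k => (hSne k).some_mem
  -- uniform bound on the bodies
  have hbnd : ∀ k, ∃ r : ℝ, ∀ s ∈ S k, ‖s‖ ≤ r := fun k =>
    (hScompact k).isBounded.exists_norm_le
  choose r hr using hbnd
  obtain ⟨ρ, hρ0, hρb⟩ := exists_bound r
  have hρS : ∀ k, ∀ s ∈ S k, ‖s‖ ≤ ρ := fun k s hs => le_trans (hr k s hs) (hρb k)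
  set δ : ℝ := 2*ρ + 1 with hδ
  have hδ0 : 0 < δ := by rw [hδ]; linarith
  -- expansion times
  obtain ⟨Tx, hTx0, hTx⟩ := exists_T a ha δ hx
  obtain ⟨Ty, hTy0, hTy⟩ := exists_T a ha δ hy
  -- κ for both sides
  obtain ⟨κx, _, hκxb⟩ := exists_bound (fun k => -((x k).1 + (a k).1))
  obtain ⟨κy, _, hκyb⟩ := exists_bound (fun k => -((y k).1 + (a k).1))
  have hκx : ∀ k, 0 ≤ (x k).1 + (a k).1 + κx := fun k => by linarith [hκxb k]
  have hκy : ∀ k, 0 ≤ (y k).1 + (a k).1 + κy := fun k => by linarith [hκyb k]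
  -- horizontal bound X₀
  obtain ⟨B1, hB10, hB1⟩ := exists_bound (fun k => ‖(x k).2‖ + Tx * ‖(x k).2 + (a k).2‖)
  obtain ⟨B2, hB20, hB2⟩ := exists_bound (fun k => ‖(y k).2‖ + Ty * ‖(y k).2 + (a k).2‖)
  set X₀ : ℝ := max B1 B2 with hX₀
  have hX₀0 : 0 ≤ X₀ := le_trans hB10 (le_max_left _ _)
  have hX₀bx : ∀ k, ‖(x k).2‖ + Tx * ‖(x k).2 + (a k).2‖ ≤ X₀ :=
    fun k => le_trans (hB1 k) (le_max_left _ _)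
  have hX₀by : ∀ k, ‖(y k).2‖ + Ty * ‖(y k).2 + (a k).2‖ ≤ X₀ :=
    fun k => le_trans (hB2 k) (le_max_right _ _)
  set X : ℝ := X₀ + δ with hX
  set R : ℝ := X + (N:ℝ)*δ + X₀ with hR
  have hX0 : 0 ≤ X := by rw [hX]; linarith
  have hXN : X + (N:ℝ)*δ ≤ R := by rw [hR]; linarith
  have hX₀R : X₀ ≤ R := by
    rw [hR]
    have : 0 ≤ (N:ℝ)*δ := by positivity
    linarith
  -- bound of g on the relevant ball
  obtain ⟨M, hM⟩ := usc_bound hg (R + ρ)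
  set Z : ℝ := M + ρ + 1 with hZ
  -- vertical lifts
  obtain ⟨Cx, _, hCx⟩ := exists_bound (fun k => Z - (x k).1)
  obtain ⟨Cy, _, hCy⟩ := exists_bound (fun k => Z - (y k).1)
  set T₀x : ℝ := max Cx 0 with hT₀x
  set T₀y : ℝ := max Cy 0 with hT₀y
  have hT₀x0 : 0 ≤ T₀x := le_max_right _ _
  have hT₀y0 : 0 ≤ T₀y := le_max_right _ _
  have hT₀xZ : ∀ k, Z ≤ (x k).1 + T₀x := by
    intro k
    have h1 := hCx k
    have h2 : Cx ≤ T₀x := le_max_left _ _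
    linarith
  have hT₀yZ : ∀ k, Z ≤ (y k).1 + T₀y := by
    intro k
    have h1 := hCy k
    have h2 : Cy ≤ T₀y := le_max_left _ _
    linarith
  -- the two half-paths
  have px := side g S i₀ hSconvex a ha ρ δ X₀ X R M Z T₀x Tx κx
    hρ0 hρS hδ hM hZ hX hX₀0 hXN hX₀R x hx hT₀x0 hT₀xZ hκx hTx0 hTx hX₀bx
  have py := side g S i₀ hSconvex a ha ρ δ X₀ X R M Z T₀y Ty κy
    hρ0 hρS hδ hM hZ hX hX₀0 hXN hX₀R y hy hT₀y0 hT₀yZ hκy hTy0 hTy hX₀by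
  exact px.trans py.symm


end Stmt5Aux


/-- A point of `ℝ^d` is modeled as `ℝ × (Fin m → ℝ)` with `m = d - 1 ≥ 1`, the
first factor being the coordinate `x₁`; `D` is the open region strictly above
the graph of an upper semicontinuous function `g`. -/
theorem stmt_5 {m : ℕ} (hm : 1 ≤ m) {N : ℕ}
    (g : (Fin m → ℝ) → ℝ) (hg : UpperSemicontinuous g)
    (S : Fin N → Set (ℝ × (Fin m → ℝ)))
    (hSne : ∀ k, (S k).Nonempty)
    (hScompact : ∀ k, IsCompact (S k))
    (hSconvex : ∀ k, Convex ℝ (S k)) :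
    ∀ x ∈ {x : Fin N → ℝ × (Fin m → ℝ) |
        (∀ k, (fun s => s + x k) '' S k ⊆ {p | g p.2 < p.1}) ∧
        Pairwise fun j k =>
          ((fun s => s + x j) '' S j) ∩ ((fun s => s + x k) '' S k) = ∅},
      ∀ y ∈ {x : Fin N → ℝ × (Fin m → ℝ) |
        (∀ k, (fun s => s + x k) '' S k ⊆ {p | g p.2 < p.1}) ∧
        Pairwise fun j k =>
          ((fun s => s + x j) '' S j) ∩ ((fun s => s + x k) '' S k) = ∅},
      JoinedIn {x : Fin N → ℝ × (Fin m → ℝ) |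
        (∀ k, (fun s => s + x k) '' S k ⊆ {p | g p.2 < p.1}) ∧
        Pairwise fun j k =>
          ((fun s => s + x j) '' S j) ∩ ((fun s => s + x k) '' S k) = ∅} x y := by
  intro x hx y hy
  exact Stmt5Aux.main_assembly hm g hg S hSne hScompact hSconvex x hx y hy
end

section
/- Let $D = \{(x_1,\dots,x_d) \in \mathbb{R}^d : x_1 > 0,\ x_2^2 + \dots + x_d^2 < 1\}$ be a one-sided open cylinder, and let $S_k = \overline{B}(0, r_k)$ be closed balls with diameters $2r_k < 1$ for $k = 1,\dots,N$. Then the configuration space ${\bf D} = \{(x^1,\dots,x^N) \in \mathbb{R}^{Nd} : \overline{B}(x^k, r_k) \subset D \text{ for all } k, \text{ and } \overline{B}(x^j, r_j) \cap \overline{B}(x^k, r_k) = \emptyset \text{ for } j \neq k\}$ is pathwise connected. -/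
set_option linter.unusedSectionVars false

open Metric Set

variable {d : ℕ} [NeZero d]

noncomputable abbrev EE (d : ℕ) := EuclideanSpace ℝ (Fin d)

/-- zero out coordinate 0 -/
noncomputable def pi0 (v : EE d) : EE d := WithLp.toLp 2 (fun i => if i = 0 then 0 else v i)

lemma pi0_apply (v : EE d) (i : Fin d) : pi0 v i = if i = 0 then 0 else v i := rfl

lemma pi0_add (v w : EE d) : pi0 (v + w) = pi0 v + pi0 w := by
  ext i; simp only [pi0_apply, PiLp.add_apply]; split <;> simp

lemma pi0_smul (a : ℝ) (v : EE d) : pi0 (a • v) = a • pi0 v := by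
  ext i; simp only [pi0_apply, PiLp.smul_apply]; split <;> simp

lemma norm_sq_eq (v : EE d) : ‖v‖^2 = ∑ i, (v i)^2 := by
  rw [EuclideanSpace.norm_eq]
  rw [Real.sq_sqrt (by positivity)]
  simp [sq_abs]

lemma sum_erase_eq (v : EE d) : ∑ i ∈ Finset.univ.erase (0 : Fin d), (v i)^2 = ‖pi0 v‖^2 := by
  rw [norm_sq_eq]
  rw [← Finset.add_sum_erase Finset.univ (fun i => (pi0 v i)^2) (Finset.mem_univ 0)]
  have h0 : (pi0 v 0)^2 = 0 := by simp [pi0]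
  rw [h0, zero_add]
  refine Finset.sum_congr rfl fun i hi => ?_
  rw [Finset.mem_erase] at hi
  simp [pi0, hi.1]

lemma decomp (v : EE d) : ‖v‖^2 = (v 0)^2 + ‖pi0 v‖^2 := by
  rw [norm_sq_eq, ← sum_erase_eq, Finset.add_sum_erase Finset.univ (fun i => (v i)^2) (Finset.mem_univ 0)]

lemma abs_coord_le (v : EE d) : |v 0| ≤ ‖v‖ := by
  have h := decomp v
  nlinarith [norm_nonneg v, sq_nonneg (‖pi0 v‖), abs_nonneg (v 0), sq_abs (v 0)]

lemma norm_pi0_le (v : EE d) : ‖pi0 v‖ ≤ ‖v‖ := by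
  have h := decomp v
  nlinarith [norm_nonneg v, norm_nonneg (pi0 v), sq_nonneg (v 0)]


lemma pi0_sub (v w : EE d) : pi0 (v - w) = pi0 v - pi0 w := by
  ext i; simp only [pi0_apply, PiLp.sub_apply]; split <;> simp

lemma pi0_idem (v : EE d) : pi0 (pi0 v) = pi0 v := by
  ext i; simp only [pi0_apply]; split <;> rfl

noncomputable def ee0 : EE d := EuclideanSpace.single 0 1

lemma ee0_zero : (ee0 : EE d) 0 = 1 := by simp [ee0]

lemma pi0_ee0 : pi0 (ee0 : EE d) = 0 := by
  ext i
  simp only [pi0_apply, ee0, EuclideanSpace.single_apply]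
  split
  · simp
  · simp_all [eq_comm]

lemma norm_ee0 : ‖(ee0 : EE d)‖ = 1 := by simp [ee0, EuclideanSpace.norm_single]

lemma dist_coord0 (u v : EE d) : |u 0 - v 0| ≤ dist u v := by
  rw [dist_eq_norm]
  have := abs_coord_le (u - v)
  simpa using this

lemma dist_cross (u v : EE d) : ‖pi0 u - pi0 v‖ ≤ dist u v := by
  rw [dist_eq_norm, ← pi0_sub]
  exact norm_pi0_le _

/-- the cylinder condition as norms -/
lemma cyl_mem_iff (z : EE d) :
    z ∈ {z : EE d | 0 < z 0 ∧ (∑ i ∈ Finset.univ.erase (0 : Fin d), (z i) ^ 2) < 1}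
      ↔ 0 < z 0 ∧ ‖pi0 z‖ < 1 := by
  simp only [Set.mem_setOf_eq, sum_erase_eq]
  constructor
  · rintro ⟨h1, h2⟩
    exact ⟨h1, by nlinarith [norm_nonneg (pi0 z)]⟩
  · rintro ⟨h1, h2⟩
    exact ⟨h1, by nlinarith [norm_nonneg (pi0 z)]⟩

noncomputable def ee1 (hd : 2 ≤ d) : EE d := EuclideanSpace.single ⟨1, by omega⟩ 1

lemma ee1_zero (hd : 2 ≤ d) : (ee1 hd) 0 = 0 := by
  simp only [ee1, EuclideanSpace.single_apply]
  have : (0 : Fin d) ≠ ⟨1, by omega⟩ := by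
    intro h; exact absurd (congrArg Fin.val h) (by simp)
  simp [this]

lemma pi0_ee1 (hd : 2 ≤ d) : pi0 (ee1 hd) = ee1 hd := by
  ext i
  simp only [pi0_apply]
  split
  · rename_i h; subst h; rw [ee1_zero]
  · rfl

lemma norm_ee1 (hd : 2 ≤ d) : ‖ee1 hd‖ = 1 := by simp [ee1, EuclideanSpace.norm_single]

section config
variable {N : ℕ} (r : Fin N → ℝ)

/-- the configuration space -/
def Sset : Set (Fin N → EE d) :=
  {x : Fin N → EuclideanSpace ℝ (Fin d) |
        (∀ k, closedBall (x k) (r k) ⊆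
          {z : EuclideanSpace ℝ (Fin d) |
            0 < z 0 ∧ (∑ i ∈ Finset.univ.erase (0 : Fin d), (z i) ^ 2) < 1}) ∧
        Pairwise fun j k => closedBall (x j) (r j) ∩ closedBall (x k) (r k) = ∅}

/-- characterization of membership -/
lemma mem_Sset_iff (hd : 2 ≤ d) (hr : ∀ k, 0 < r k) (x : Fin N → EE d) :
    x ∈ Sset r ↔ (∀ k, r k < x k 0 ∧ ‖pi0 (x k)‖ < 1 - r k) ∧
      (∀ j k, j ≠ k → r j + r k < dist (x j) (x k)) := by
  constructor
  · rintro ⟨h1, h2⟩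
    constructor
    · intro k
      constructor
      · have hz : x k - (r k) • ee0 ∈ closedBall (x k) (r k) := by
          simp [dist_eq_norm, norm_smul, norm_ee0, abs_of_pos (hr k), (hr k).le]
        have := (cyl_mem_iff _).mp (h1 k hz)
        have hz0 : (x k - (r k) • ee0 : EE d) 0 = x k 0 - r k := by
          simp [PiLp.sub_apply, PiLp.smul_apply, ee0_zero]
        rw [hz0] at this
        linarith [this.1]
      · -- use point in direction of cross component
        by_cases hc : pi0 (x k) = 0
        · have hz : x k + (r k) • ee1 hd ∈ closedBall (x k) (r k) := by
            simp [dist_eq_norm, norm_smul, norm_ee1 hd, abs_of_pos (hr k), (hr k).le]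
          have := ((cyl_mem_iff _).mp (h1 k hz)).2
          rw [pi0_add, pi0_smul, pi0_ee1 hd, hc, zero_add, norm_smul, norm_ee1 hd,
            Real.norm_eq_abs, abs_of_pos (hr k), mul_one] at this
          rw [hc, norm_zero]
          linarith
        · set c := ‖pi0 (x k)‖ with hcdef
          have hcpos : 0 < c := norm_pos_iff.mpr hc
          have hz : x k + ((r k)/c) • pi0 (x k) ∈ closedBall (x k) (r k) := by
            simp only [Metric.mem_closedBall, dist_eq_norm, add_sub_cancel_left, norm_smul,
              Real.norm_eq_abs, abs_of_pos (div_pos (hr k) hcpos)]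
            rw [div_mul_cancel₀ _ (ne_of_gt hcpos)]
          have := ((cyl_mem_iff _).mp (h1 k hz)).2
          rw [pi0_add, pi0_smul, pi0_idem] at this
          have heq : pi0 (x k) + (r k / c) • pi0 (x k) = (1 + r k / c) • pi0 (x k) := by
            rw [add_smul, one_smul]
          rw [heq, norm_smul, Real.norm_eq_abs,
            abs_of_pos (by have := div_pos (hr k) hcpos; linarith : (0:ℝ) < 1 + r k / c), ← hcdef] at this
          have : c + r k < 1 := by
            have hexp : (1 + r k / c) * c = c + r k := by field_simp
            linarith [hexp ▸ this]
          linarith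
    · intro j k hjk
      by_contra hcon
      push_neg at hcon
      set s := r j + r k with hs
      have hspos : 0 < s := by rw [hs]; exact add_pos (hr j) (hr k)
      set p := x j + ((r j)/s) • (x k - x j) with hp
      have hpj : p ∈ closedBall (x j) (r j) := by
        simp only [hp, Metric.mem_closedBall, dist_eq_norm, add_sub_cancel_left, norm_smul,
          Real.norm_eq_abs, abs_of_pos (div_pos (hr j) hspos)]
        rw [← dist_eq_norm, dist_comm]
        calc r j / s * dist (x j) (x k) ≤ r j / s * s := by
              apply mul_le_mul_of_nonneg_left hcon (le_of_lt (div_pos (hr j) hspos))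
          _ = r j := div_mul_cancel₀ _ (ne_of_gt hspos)
      have hpk : p ∈ closedBall (x k) (r k) := by
        have hdiff : p - x k = ((r k)/s) • (x j - x k) := by
          rw [hp]
          have : (r j)/s = 1 - (r k)/s := by field_simp; ring
          rw [this]
          module
        simp only [Metric.mem_closedBall, dist_eq_norm, hdiff, norm_smul,
          Real.norm_eq_abs, abs_of_pos (div_pos (hr k) hspos)]
        rw [← dist_eq_norm, dist_comm (x j) (x k)]
        calc r k / s * dist (x k) (x j) ≤ r k / s * s := by
              rw [dist_comm]
              apply mul_le_mul_of_nonneg_left hcon (le_of_lt (div_pos (hr k) hspos))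
          _ = r k := div_mul_cancel₀ _ (ne_of_gt hspos)
      have h3 := h2 hjk
      simp only [Set.eq_empty_iff_forall_notMem] at h3
      exact h3 p ⟨hpj, hpk⟩
  · rintro ⟨h1, h2⟩
    constructor
    · intro k z hz
      rw [Metric.mem_closedBall] at hz
      rw [cyl_mem_iff]
      constructor
      · have := dist_coord0 z (x k)
        have h := (h1 k).1
        have : |z 0 - x k 0| ≤ r k := le_trans (dist_coord0 z (x k)) hz
        have := abs_le.mp this
        linarith [(h1 k).1, this.1]
      · have hcr : ‖pi0 z - pi0 (x k)‖ ≤ r k := le_trans (dist_cross z (x k)) hz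
        have : ‖pi0 z‖ ≤ ‖pi0 (x k)‖ + ‖pi0 z - pi0 (x k)‖ := by
          have := norm_add_le (pi0 (x k)) (pi0 z - pi0 (x k))
          simpa using this
        linarith [(h1 k).2]
    · intro j k hjk
      rw [Set.eq_empty_iff_forall_notMem]
      intro p hp
      simp only [Set.mem_inter_iff, Metric.mem_closedBall] at hp
      have := dist_triangle (x j) p (x k)
      rw [dist_comm (x j) p] at this
      have := h2 j k hjk
      linarith [hp.1, hp.2, dist_triangle (x j) p (x k), dist_comm (x j) p ▸ (dist_triangle (x j) p (x k))]

lemma joined_segment {S : Set (Fin N → EE d)} {p q : Fin N → EE d}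
    (h : ∀ t ∈ Set.Icc (0:ℝ) 1, (fun k => p k + t • (q k - p k)) ∈ S) :
    JoinedIn S p q := by
  refine ⟨⟨⟨fun t => fun k => p k + (t:ℝ) • (q k - p k), ?_⟩, ?_, ?_⟩, ?_⟩
  · apply continuous_pi
    intro k
    exact continuous_const.add ((continuous_subtype_val.smul continuous_const))
  · funext k; simp
  · funext k; simp
  · intro t
    exact h t ⟨t.2.1, t.2.2⟩

section rank
open Classical in
/-- number of indices lexicographically (coord 0, index) below `k` -/
noncomputable def rnk (x : Fin N → EE d) (k : Fin N) : ℕ :=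
  (Finset.univ.filter (fun j => x j 0 < x k 0 ∨ (x j 0 = x k 0 ∧ j < k))).card

open Classical in
lemma rnk_lt_rnk {x : Fin N → EE d} {j k : Fin N}
    (h : x j 0 < x k 0 ∨ (x j 0 = x k 0 ∧ j < k)) : rnk x j < rnk x k := by
  apply Finset.card_lt_card
  rw [Finset.ssubset_iff_of_subset]
  · refine ⟨j, Finset.mem_filter.mpr ⟨Finset.mem_univ _, h⟩, ?_⟩
    simp only [Finset.mem_filter, Finset.mem_univ, true_and]
    intro hcon
    rcases hcon with h' | h'
    · exact lt_irrefl _ h'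
    · exact lt_irrefl _ h'
  · intro i hi
    simp only [Finset.mem_filter, Finset.mem_univ, true_and] at hi ⊢
    rcases hi with h' | ⟨h', h''⟩
    · rcases h with h0 | ⟨h0, _⟩
      · exact Or.inl (h'.trans h0)
      · exact Or.inl (h0 ▸ h')
    · rcases h with h0 | ⟨h0, h1⟩
      · exact Or.inl (h' ▸ h0)
      · exact Or.inr ⟨h'.trans h0, h''.trans h1⟩

lemma lex_trichotomy (x : Fin N → EE d) {j k : Fin N} (hjk : j ≠ k) :
    (x j 0 < x k 0 ∨ (x j 0 = x k 0 ∧ j < k)) ∨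
    (x k 0 < x j 0 ∨ (x k 0 = x j 0 ∧ k < j)) := by
  rcases lt_trichotomy (x j 0) (x k 0) with h | h | h
  · exact Or.inl (Or.inl h)
  · rcases lt_or_gt_of_ne hjk with h' | h'
    · exact Or.inl (Or.inr ⟨h, h'⟩)
    · exact Or.inr (Or.inr ⟨h.symm, h'⟩)
  · exact Or.inr (Or.inl h)

open Classical in
lemma rnk_lt_N (x : Fin N → EE d) (k : Fin N) : rnk x k < N := by
  have : (Finset.univ.filter (fun j => x j 0 < x k 0 ∨ (x j 0 = x k 0 ∧ j < k)))
      ⊆ Finset.univ.erase k := by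
    intro i hi
    simp only [Finset.mem_filter, Finset.mem_univ, true_and] at hi
    rw [Finset.mem_erase]
    refine ⟨?_, Finset.mem_univ _⟩
    rintro rfl
    rcases hi with h | ⟨_, h⟩ <;> exact lt_irrefl _ h
  calc rnk x k ≤ (Finset.univ.erase k).card := Finset.card_le_card this
    _ < N := by
        rw [Finset.card_erase_of_mem (Finset.mem_univ _), Finset.card_univ, Fintype.card_fin]
        have : 0 < N := Fin.pos k
        omega

lemma rnk_inj (x : Fin N → EE d) {j k : Fin N} (hjk : j ≠ k) : rnk x j ≠ rnk x k := by
  rcases lex_trichotomy x hjk with h | h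
  · exact ne_of_lt (rnk_lt_rnk h)
  · exact (ne_of_lt (rnk_lt_rnk h)).symm

lemma rnk_sign (x : Fin N → EE d) (j k : Fin N) :
    0 ≤ (x j 0 - x k 0) * ((rnk x j : ℝ) - rnk x k) := by
  rcases lt_trichotomy (x j 0) (x k 0) with h | h | h
  · have := rnk_lt_rnk (x := x) (j := j) (k := k) (Or.inl h)
    have h2 : (rnk x j : ℝ) < rnk x k := by exact_mod_cast this
    nlinarith
  · rw [h]; simp
  · have := rnk_lt_rnk (x := x) (j := k) (k := j) (Or.inl h)
    have h2 : (rnk x k : ℝ) < rnk x j := by exact_mod_cast this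
    nlinarith

end rank

lemma pi0_coord0 (v : EE d) : pi0 v 0 = 0 := by simp [pi0]

lemma ee0_apply (i : Fin d) : (ee0 : EE d) i = if i = 0 then 1 else 0 := by
  simp [ee0, EuclideanSpace.single_apply]

lemma nat_gap {m n : ℕ} (h : m ≠ n) : 1 ≤ |(m : ℝ) - n| := by
  rcases lt_or_gt_of_ne h with h' | h'
  · rw [abs_sub_comm, abs_of_pos (by exact_mod_cast sub_pos.mpr (by exact_mod_cast h' : (m:ℝ) < n))]
    have : (m + 1 : ℕ) ≤ n := h'
    have : ((m:ℝ) + 1) ≤ n := by exact_mod_cast this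
    linarith
  · rw [abs_of_pos (by exact_mod_cast sub_pos.mpr (by exact_mod_cast h' : (n:ℝ) < m))]
    have : (n + 1 : ℕ) ≤ m := h'
    have : ((n:ℝ) + 1) ≤ m := by exact_mod_cast this
    linarith

variable {r} in
lemma disj_of_gap (hr' : ∀ k, 2 * r k < 1) {p : Fin N → EE d} {j k : Fin N}
    (h : 1 ≤ |p j 0 - p k 0|) : r j + r k < dist (p j) (p k) :=
  lt_of_lt_of_le (by linarith [hr' j, hr' k]) (le_trans h (dist_coord0 _ _))

variable {r} in
lemma disj_of_cross (hr' : ∀ k, 2 * r k < 1) {p : Fin N → EE d} {j k : Fin N}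
    (h : 1 ≤ ‖pi0 (p j) - pi0 (p k)‖) : r j + r k < dist (p j) (p k) :=
  lt_of_lt_of_le (by linarith [hr' j, hr' k]) (le_trans h (dist_cross _ _))

variable {r} in
lemma mem_std (hd : 2 ≤ d) (hr : ∀ k, 0 < r k) (hr' : ∀ k, 2 * r k < 1)
    (A : Fin N → ℝ) (C : Fin N → EE d)
    (hA : ∀ k, 1 ≤ A k) (hCpi : ∀ k, pi0 (C k) = C k)
    (hCn : ∀ k, ‖C k‖ ≤ 1/2)
    (hsep : ∀ j k, j ≠ k → 1 ≤ |A j - A k| ∨ 1 ≤ ‖C j - C k‖) :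
    (fun k => (A k) • ee0 + C k) ∈ Sset r := by
  have hC0 : ∀ k, (C k) 0 = 0 := by
    intro k; rw [← hCpi k]; exact pi0_coord0 _
  have hcoord : ∀ k, ((A k) • ee0 + C k : EE d) 0 = A k := by
    intro k
    simp [PiLp.add_apply, PiLp.smul_apply, ee0_zero, hC0 k]
  have hcross : ∀ k, pi0 ((A k) • ee0 + C k) = C k := by
    intro k
    rw [pi0_add, pi0_smul, pi0_ee0, smul_zero, zero_add, hCpi k]
  rw [mem_Sset_iff r hd hr]
  refine ⟨fun k => ⟨?_, ?_⟩, fun j k hjk => ?_⟩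
  · rw [hcoord k]; linarith [hA k, hr' k]
  · rw [hcross k]; linarith [hCn k, hr' k]
  · rcases hsep j k hjk with h | h
    · refine disj_of_gap (p := fun k => (A k) • ee0 + C k) hr' ?_
      show 1 ≤ |(A j • ee0 + C j : EE d) 0 - (A k • ee0 + C k : EE d) 0|
      rw [hcoord j, hcoord k]; exact h
    · refine disj_of_cross (p := fun k => (A k) • ee0 + C k) hr' ?_
      show 1 ≤ ‖pi0 (A j • ee0 + C j) - pi0 (A k • ee0 + C k)‖
      rw [hcross j, hcross k]; exact h

variable {r} in
lemma joined_axis (hd : 2 ≤ d) (hr : ∀ k, 0 < r k) (hr' : ∀ k, 2 * r k < 1)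
    (p q : Fin N → ℝ) (hp : ∀ k, r k < p k) (hq : ∀ k, r k < q k)
    (hsep : ∀ j k, j ≠ k →
      (1 ≤ p k - p j ∧ 1 ≤ q k - q j) ∨ (1 ≤ p j - p k ∧ 1 ≤ q j - q k)) :
    JoinedIn (Sset r) (fun k => ((p k) • ee0 : EE d)) (fun k => ((q k) • ee0 : EE d)) := by
  apply joined_segment
  intro t ht
  obtain ⟨ht0, ht1⟩ := ht
  have key : (fun k => ((p k) • ee0 : EE d) + t • ((q k) • ee0 - (p k) • ee0))
      = fun k => (((1-t) * p k + t * q k) • ee0 : EE d) := by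
    funext k
    module
  rw [key]
  set A := fun k => (1-t) * p k + t * q k with hA
  have hAgt : ∀ k, r k < A k := by
    intro k
    simp only [hA]
    rcases le_total (p k) (q k) with h | h
    · nlinarith [hp k]
    · nlinarith [hq k]
  have hAsep : ∀ j k, j ≠ k → 1 ≤ |A j - A k| := by
    intro j k hjk
    rcases hsep j k hjk with ⟨h1, h2⟩ | ⟨h1, h2⟩
    · have hge : (1:ℝ) ≤ A k - A j := by simp only [hA]; nlinarith
      rw [abs_sub_comm, abs_of_nonneg (by linarith : (0:ℝ) ≤ A k - A j)]
      exact hge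
    · have hge : (1:ℝ) ≤ A j - A k := by simp only [hA]; nlinarith
      rw [abs_of_nonneg (by linarith : (0:ℝ) ≤ A j - A k)]
      exact hge
  rw [mem_Sset_iff r hd hr]
  have hcoord : ∀ k, ((A k) • ee0 : EE d) 0 = A k := by
    intro k; simp [PiLp.smul_apply, ee0_zero]
  have hcross : ∀ k, pi0 ((A k) • ee0 : EE d) = 0 := by
    intro k; rw [pi0_smul, pi0_ee0, smul_zero]
  refine ⟨fun k => ⟨?_, ?_⟩, fun j k hjk => ?_⟩
  · rw [hcoord k]; exact hAgt k
  · rw [hcross k, norm_zero]; linarith [hr' k]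
  · refine disj_of_gap (p := fun k => (A k) • ee0) hr' ?_
    show 1 ≤ |((A j) • ee0 : EE d) 0 - ((A k) • ee0 : EE d) 0|
    rw [hcoord j, hcoord k]
    exact hAsep j k hjk

lemma norm_add_smul_ee0 (w : EE d) (s : ℝ) :
    ‖w + s • ee0‖^2 = (w 0 + s)^2 + ‖pi0 w‖^2 := by
  have h0 : (w + s • ee0 : EE d) 0 = w 0 + s := by
    simp [PiLp.add_apply, PiLp.smul_apply, ee0_zero]
  have hp : pi0 (w + s • ee0) = pi0 w := by
    rw [pi0_add, pi0_smul, pi0_ee0, smul_zero, add_zero]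
  rw [decomp (w + s • ee0), h0, hp]

lemma seg2_key (v : EE d) (t : ℝ) :
    v + t • ((v 0) • ee0 - v) = (v 0) • ee0 + (1 - t) • pi0 v := by
  ext i
  simp only [PiLp.add_apply, PiLp.smul_apply, PiLp.sub_apply, ee0_apply, pi0_apply,
    smul_eq_mul]
  split
  · rename_i h; subst h; ring
  · ring

lemma split_v (v : EE d) : v = (v 0) • ee0 + pi0 v := by
  ext i
  simp only [PiLp.add_apply, PiLp.smul_apply, ee0_apply, pi0_apply, smul_eq_mul]
  split
  · rename_i h; subst h; simp
  · simp

set_option maxHeartbeats 1000000 in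
variable {r} in
lemma toCanon (hd : 2 ≤ d) (hr : ∀ k, 0 < r k) (hr' : ∀ k, 2 * r k < 1)
    {x : Fin N → EE d} (hx : x ∈ Sset r) :
    JoinedIn (Sset r) x (fun k => (((1:ℝ) + rnk x k) • ee0 : EE d)) := by
  obtain ⟨hQ1, hQ2⟩ := (mem_Sset_iff r hd hr x).mp hx
  set B := ∑ j, |x j 0| with hBdef
  have hB : ∀ k, |x k 0| ≤ B :=
    fun k => Finset.single_le_sum (f := fun j => |x j 0|) (fun j _ => abs_nonneg _) (Finset.mem_univ k)
  have hBpos : 0 ≤ B := Finset.sum_nonneg (fun j _ => abs_nonneg _)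
  set T : ℝ := 2 * B + 1 with hTdef
  have hT : 1 ≤ T := by simp only [hTdef]; linarith
  set g : Fin N → EE d := fun k => x k + (T * rnk x k) • ee0 with hgdef
  have hg0 : ∀ k, g k 0 = x k 0 + T * rnk x k := by
    intro k; simp [hgdef, PiLp.add_apply, PiLp.smul_apply, ee0_zero]
  have hgcross : ∀ k, pi0 (g k) = pi0 (x k) := by
    intro k; simp only [hgdef]; rw [pi0_add, pi0_smul, pi0_ee0, smul_zero, add_zero]
  have hg0gt : ∀ k, r k < g k 0 := by
    intro k
    rw [hg0 k]
    have : (0:ℝ) ≤ T * rnk x k := by positivity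
    linarith [(hQ1 k).1]
  have hggap : ∀ j k, rnk x j < rnk x k → 1 ≤ g k 0 - g j 0 := by
    intro j k hlt
    rw [hg0 j, hg0 k]
    have hcast : (rnk x j : ℝ) + 1 ≤ rnk x k := by exact_mod_cast hlt
    have h1 := abs_le.mp (hB j)
    have h2 := abs_le.mp (hB k)
    have hT0 : (0:ℝ) ≤ T := by linarith
    nlinarith
  -- Step 1 : x to g
  have step1 : JoinedIn (Sset r) x g := by
    apply joined_segment
    intro t ht
    obtain ⟨ht0, ht1⟩ := ht
    have hkey : ∀ k, x k + t • (g k - x k) = x k + (t * (T * rnk x k)) • ee0 := by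
      intro k
      simp only [hgdef, add_sub_cancel_left, smul_smul]
    rw [mem_Sset_iff r hd hr]
    refine ⟨fun k => ⟨?_, ?_⟩, fun j k hjk => ?_⟩
    · show r k < (x k + t • (g k - x k)) 0
      rw [hkey k]
      have : (x k + (t * (T * rnk x k)) • ee0 : EE d) 0 = x k 0 + t * (T * rnk x k) := by
        simp [PiLp.add_apply, PiLp.smul_apply, ee0_zero]
      rw [this]
      have hs : (0:ℝ) ≤ t * (T * rnk x k) := by positivity
      linarith [(hQ1 k).1]
    · show ‖pi0 (x k + t • (g k - x k))‖ < 1 - r k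
      rw [hkey k, pi0_add, pi0_smul, pi0_ee0, smul_zero, add_zero]
      exact (hQ1 k).2
    · show r j + r k < dist (x j + t • (g j - x j)) (x k + t • (g k - x k))
      rw [hkey j, hkey k, dist_eq_norm]
      set sj := t * (T * rnk x j) with hsj
      set sk := t * (T * rnk x k) with hsk
      have hu : x j + sj • ee0 - (x k + sk • ee0) = (x j - x k) + (sj - sk) • ee0 := by
        module
      rw [hu]
      have hns := norm_add_smul_ee0 (x j - x k) (sj - sk)
      have hw0 : (x j - x k : EE d) 0 = x j 0 - x k 0 := by simp [PiLp.sub_apply]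
      have hsign : 0 ≤ (x j 0 - x k 0) * (sj - sk) := by
        have : sj - sk = (t * T) * ((rnk x j : ℝ) - rnk x k) := by
          simp only [hsj, hsk]; ring
        rw [this]
        have h1 := rnk_sign x j k
        have h2 : (0:ℝ) ≤ t * T := by positivity
        nlinarith
      have hdist := hQ2 j k hjk
      rw [dist_eq_norm] at hdist
      have hd2 := decomp (x j - x k)
      have hge : ‖x j - x k‖^2 ≤ ‖x j - x k + (sj - sk) • ee0‖^2 := by
        rw [hns, hd2, hw0]
        nlinarith [sq_nonneg (sj - sk)]
      have hrr : 0 ≤ r j + r k := by linarith [hr j, hr k]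
      have : (r j + r k)^2 < ‖x j - x k + (sj - sk) • ee0‖^2 := by
        nlinarith [norm_nonneg (x j - x k)]
      exact lt_of_pow_lt_pow_left₀ 2 (norm_nonneg _) this
  -- Step 2 : g to axis projection of g
  have step2 : JoinedIn (Sset r) g (fun k => ((g k 0) • ee0 : EE d)) := by
    apply joined_segment
    intro t ht
    obtain ⟨ht0, ht1⟩ := ht
    have hkey : ∀ k, g k + t • ((g k 0) • ee0 - g k)
        = (g k 0) • ee0 + (1 - t) • pi0 (g k) := fun k => seg2_key (g k) t
    rw [mem_Sset_iff r hd hr]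
    have hc0 : ∀ k, (g k + t • ((g k 0) • ee0 - g k) : EE d) 0 = g k 0 := by
      intro k
      rw [hkey k]
      simp [PiLp.add_apply, PiLp.smul_apply, ee0_zero, pi0_coord0]
    have hcr : ∀ k, pi0 (g k + t • ((g k 0) • ee0 - g k)) = (1 - t) • pi0 (g k) := by
      intro k
      rw [hkey k, pi0_add, pi0_smul, pi0_ee0, smul_zero, zero_add, pi0_smul, pi0_idem]
    refine ⟨fun k => ⟨?_, ?_⟩, fun j k hjk => ?_⟩
    · show r k < (g k + t • ((g k 0) • ee0 - g k) : EE d) 0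
      rw [hc0 k]; exact hg0gt k
    · show ‖pi0 (g k + t • ((g k 0) • ee0 - g k))‖ < 1 - r k
      rw [hcr k, norm_smul, Real.norm_eq_abs, abs_of_nonneg (by linarith : (0:ℝ) ≤ 1 - t)]
      have h2 := (hQ1 k).2
      rw [← hgcross k] at h2
      nlinarith [norm_nonneg (pi0 (g k)), hr k, hr' k]
    · refine disj_of_gap (p := fun k => g k + t • ((g k 0) • ee0 - g k)) hr' ?_
      show (1:ℝ) ≤ |(g j + t • ((g j 0) • ee0 - g j) : EE d) 0
        - (g k + t • ((g k 0) • ee0 - g k) : EE d) 0|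
      rw [hc0 j, hc0 k]
      rcases lt_or_gt_of_ne (rnk_inj x hjk) with h | h
      · rw [abs_sub_comm, abs_of_nonneg (by linarith [hggap j k h] : (0:ℝ) ≤ g k 0 - g j 0)]
        exact hggap j k h
      · rw [abs_of_nonneg (by linarith [hggap k j h] : (0:ℝ) ≤ g j 0 - g k 0)]
        exact hggap k j h
  -- Step 3 : axis to canonical
  have step3 : JoinedIn (Sset r) (fun k => ((g k 0) • ee0 : EE d))
      (fun k => (((1:ℝ) + rnk x k) • ee0 : EE d)) := by
    apply joined_axis hd hr hr'
    · exact hg0gt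
    · intro k
      have : (0:ℝ) ≤ rnk x k := Nat.cast_nonneg _
      linarith [hr' k]
    · intro j k hjk
      rcases lt_or_gt_of_ne (rnk_inj x hjk) with h | h
      · left
        refine ⟨hggap j k h, ?_⟩
        have : (rnk x j : ℝ) + 1 ≤ rnk x k := by exact_mod_cast h
        linarith
      · right
        refine ⟨hggap k j h, ?_⟩
        have : (rnk x k : ℝ) + 1 ≤ rnk x j := by exact_mod_cast h
        linarith
  exact (step1.trans step2).trans step3

lemma pi0_neg (v : EE d) : pi0 (-v) = -pi0 v := by
  have := pi0_smul (-1 : ℝ) v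
  simpa using this

lemma one_le_abs₁ {x y : ℝ} (h : x + 1 ≤ y) : 1 ≤ |y - x| := by
  rw [abs_of_nonneg (by linarith)]; linarith

lemma one_le_abs₂ {x y : ℝ} (h : x + 1 ≤ y) : 1 ≤ |x - y| := by
  rw [abs_sub_comm]; exact one_le_abs₁ h

set_option maxHeartbeats 1000000 in
variable {r} in
lemma swap_move (hd : 2 ≤ d) (hr : ∀ k, 0 < r k) (hr' : ∀ k, 2 * r k < 1)
    (σ : Equiv.Perm (Fin N)) (c s : Fin N) (hcs : (s : ℕ) = (c : ℕ) + 1) :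
    JoinedIn (Sset r) (fun k => (((1:ℝ) + (σ k : ℕ)) • ee0 : EE d))
      (fun k => (((1:ℝ) + ((Equiv.swap c s * σ) k : ℕ)) • ee0 : EE d)) := by
  classical
  set a := σ.symm c with ha
  set b := σ.symm s with hb
  have hσa : σ a = c := Equiv.apply_symm_apply σ c
  have hσb : σ b = s := Equiv.apply_symm_apply σ s
  have hcs' : c ≠ s := by intro h; rw [h] at hcs; omega
  have hab : a ≠ b := by
    intro h; apply hcs'; rw [← hσa, ← hσb, h]
  set u : EE d := (1/2 : ℝ) • ee1 hd with hu
  have hupi : pi0 u = u := by rw [hu, pi0_smul, pi0_ee1 hd]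
  have hun : ‖u‖ = 1/2 := by
    rw [hu, norm_smul, Real.norm_eq_abs, norm_ee1 hd]; norm_num
  set C : Fin N → EE d := fun k => if k = a then u else if k = b then -u else 0 with hC
  have hCa : C a = u := by simp [hC]
  have hCb : C b = -u := by simp [hC, Ne.symm hab]
  have hCo : ∀ k, k ≠ a → k ≠ b → C k = 0 := by
    intro k h1 h2; simp [hC, h1, h2]
  have hCpi : ∀ k, pi0 (C k) = C k := by
    intro k
    by_cases h1 : k = a
    · subst h1; rw [hCa]; exact hupi
    · by_cases h2 : k = b
      · subst h2; rw [hCb, pi0_neg, hupi]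
      · rw [hCo k h1 h2]
        ext i; simp only [pi0_apply]; split <;> simp
  have hCn : ∀ k, ‖C k‖ ≤ 1/2 := by
    intro k
    by_cases h1 : k = a
    · subst h1; rw [hCa, hun]
    · by_cases h2 : k = b
      · subst h2; rw [hCb, norm_neg, hun]
      · rw [hCo k h1 h2]; simp
  have hCab : ‖C a - C b‖ = 1 := by
    rw [hCa, hCb, sub_neg_eq_add, ← two_smul ℝ u, norm_smul, hun]
    norm_num
  have hCba : ‖C b - C a‖ = 1 := by rw [norm_sub_rev]; exact hCab
  set A1 : Fin N → ℝ := fun k => 1 + (σ k : ℕ) with hA1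
  set A2 : Fin N → ℝ := fun k => 1 + ((Equiv.swap c s * σ) k : ℕ) with hA2
  set cc : ℝ := ((c : ℕ) : ℝ) with hcc
  have hA1sep : ∀ j k : Fin N, j ≠ k → 1 ≤ |A1 j - A1 k| := by
    intro j k hjk
    have h1 : ((σ j : Fin N) : ℕ) ≠ ((σ k : Fin N) : ℕ) := by
      intro h
      exact hjk (σ.injective (Fin.val_injective h))
    have := nat_gap h1
    simp only [hA1]
    convert this using 2
    ring
  have hA2sep : ∀ j k : Fin N, j ≠ k → 1 ≤ |A2 j - A2 k| := by
    intro j k hjk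
    have h1 : (((Equiv.swap c s * σ) j : Fin N) : ℕ) ≠ (((Equiv.swap c s * σ) k : Fin N) : ℕ) := by
      intro h
      exact hjk ((Equiv.swap c s * σ).injective (Fin.val_injective h))
    have := nat_gap h1
    simp only [hA2]
    convert this using 2
    ring
  have hA1ge : ∀ k, 1 ≤ A1 k := by
    intro k; simp only [hA1]
    have : (0:ℝ) ≤ ((σ k : ℕ) : ℝ) := Nat.cast_nonneg _
    linarith
  have hA2ge : ∀ k, 1 ≤ A2 k := by
    intro k; simp only [hA2]
    have : (0:ℝ) ≤ (((Equiv.swap c s * σ) k : ℕ) : ℝ) := Nat.cast_nonneg _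
    linarith
  -- evaluations
  have hA1a : A1 a = 1 + cc := by simp only [hA1, hσa, hcc]
  have hA2a : A2 a = 2 + cc := by
    simp only [hA2, Equiv.Perm.mul_apply, hσa, Equiv.swap_apply_left, hcc, hcs]
    push_cast; ring
  have hA1b : A1 b = 2 + cc := by
    simp only [hA1, hσb, hcs, hcc]; push_cast; ring
  have hA2b : A2 b = 1 + cc := by
    simp only [hA2, Equiv.Perm.mul_apply, hσb, Equiv.swap_apply_right, hcc]
  have hother : ∀ k, k ≠ a → k ≠ b →
      A2 k = A1 k ∧ (A1 k + 1 ≤ 1 + cc ∨ 2 + cc + 1 ≤ A1 k) := by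
    intro k hka hkb
    have h1 : σ k ≠ c := by
      intro h; exact hka (by rw [ha, ← h, Equiv.symm_apply_apply])
    have h2 : σ k ≠ s := by
      intro h; exact hkb (by rw [hb, ← h, Equiv.symm_apply_apply])
    have h1' : ((σ k : Fin N) : ℕ) ≠ (c : ℕ) := fun h => h1 (Fin.val_injective h)
    have h2' : ((σ k : Fin N) : ℕ) ≠ (s : ℕ) := fun h => h2 (Fin.val_injective h)
    constructor
    · simp only [hA2, hA1, Equiv.Perm.mul_apply, Equiv.swap_apply_of_ne_of_ne h1 h2]
    · have : ((σ k : Fin N) : ℕ) + 1 ≤ (c:ℕ) ∨ (c:ℕ) + 2 ≤ ((σ k : Fin N) : ℕ) := by omega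
      rcases this with h | h
      · left
        have hR : (((σ k : Fin N) : ℕ) : ℝ) + 1 ≤ ((c:ℕ):ℝ) := by exact_mod_cast h
        simp only [hA1, hcc]; linarith
      · right
        have hR : ((c:ℕ):ℝ) + 2 ≤ (((σ k : Fin N) : ℕ) : ℝ) := by exact_mod_cast h
        simp only [hA1, hcc]; linarith
  -- segment 1 : raise crosses
  have seg1 : JoinedIn (Sset r) (fun k => ((A1 k) • ee0 : EE d))
      (fun k => ((A1 k) • ee0 + C k : EE d)) := by
    apply joined_segment
    intro t ht
    obtain ⟨ht0, ht1⟩ := ht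
    have hkey : (fun k => ((A1 k) • ee0 : EE d) + t • ((A1 k) • ee0 + C k - (A1 k) • ee0))
        = fun k => ((A1 k) • ee0 + (t • C k) : EE d) := by
      funext k
      module
    rw [hkey]
    apply mem_std hd hr hr' A1 (fun k => t • C k) hA1ge
    · intro k; rw [pi0_smul, hCpi k]
    · intro k
      rw [norm_smul, Real.norm_eq_abs, abs_of_nonneg ht0]
      calc t * ‖C k‖ ≤ 1 * (1/2) := by
            apply mul_le_mul ht1 (hCn k) (norm_nonneg _) zero_le_one
        _ = 1/2 := by norm_num
    · intro j k hjk
      exact Or.inl (hA1sep j k hjk)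
  -- segment 3 : lower crosses
  have seg3 : JoinedIn (Sset r) (fun k => ((A2 k) • ee0 + C k : EE d))
      (fun k => ((A2 k) • ee0 : EE d)) := by
    apply JoinedIn.symm
    apply joined_segment
    intro t ht
    obtain ⟨ht0, ht1⟩ := ht
    have hkey : (fun k => ((A2 k) • ee0 : EE d) + t • ((A2 k) • ee0 + C k - (A2 k) • ee0))
        = fun k => ((A2 k) • ee0 + (t • C k) : EE d) := by
      funext k
      module
    rw [hkey]
    apply mem_std hd hr hr' A2 (fun k => t • C k) hA2ge
    · intro k; rw [pi0_smul, hCpi k]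
    · intro k
      rw [norm_smul, Real.norm_eq_abs, abs_of_nonneg ht0]
      calc t * ‖C k‖ ≤ 1 * (1/2) := by
            apply mul_le_mul ht1 (hCn k) (norm_nonneg _) zero_le_one
        _ = 1/2 := by norm_num
    · intro j k hjk
      exact Or.inl (hA2sep j k hjk)
  -- segment 2 : exchange axis positions
  have seg2 : JoinedIn (Sset r) (fun k => ((A1 k) • ee0 + C k : EE d))
      (fun k => ((A2 k) • ee0 + C k : EE d)) := by
    apply joined_segment
    intro t ht
    obtain ⟨ht0, ht1⟩ := ht
    have hkey : (fun k => ((A1 k) • ee0 + C k : EE d)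
          + t • ((A2 k) • ee0 + C k - ((A1 k) • ee0 + C k)))
        = fun k => ((((1-t) * A1 k + t * A2 k) • ee0 + C k : EE d)) := by
      funext k
      module
    rw [hkey]
    apply mem_std hd hr hr' (fun k => (1-t) * A1 k + t * A2 k) C
    · intro k
      have h1 := hA1ge k; have h2 := hA2ge k
      nlinarith
    · exact hCpi
    · exact hCn
    · intro j k hjk
      by_cases hja : j = a
      · subst hja
        by_cases hkb : k = b
        · subst hkb
          right; rw [hCab]
        · by_cases hka : k = a
          · exact absurd hka.symm hjk
          · left
            obtain ⟨he, hlt⟩ := hother k hka hkb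
            rw [he, hA1a, hA2a]
            rcases hlt with h | h
            · exact one_le_abs₁ (by nlinarith)
            · exact one_le_abs₂ (by nlinarith)
      · by_cases hjb : j = b
        · subst hjb
          by_cases hka : k = a
          · subst hka
            right; rw [hCba]
          · by_cases hkb : k = b
            · exact absurd hkb.symm hjk
            · left
              obtain ⟨he, hlt⟩ := hother k hka hkb
              rw [he, hA1b, hA2b]
              rcases hlt with h | h
              · exact one_le_abs₁ (by nlinarith)
              · exact one_le_abs₂ (by nlinarith)
        · by_cases hka : k = a
          · subst hka
            left
            obtain ⟨he, hlt⟩ := hother j hja hjb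
            rw [he, hA1a, hA2a]
            rcases hlt with h | h
            · exact one_le_abs₂ (by nlinarith)
            · exact one_le_abs₁ (by nlinarith)
          · by_cases hkb : k = b
            · subst hkb
              left
              obtain ⟨he, hlt⟩ := hother j hja hjb
              rw [he, hA1b, hA2b]
              rcases hlt with h | h
              · exact one_le_abs₂ (by nlinarith)
              · exact one_le_abs₁ (by nlinarith)
            · left
              obtain ⟨hej, _⟩ := hother j hja hjb
              obtain ⟨hek, _⟩ := hother k hka hkb
              have heq : (1-t) * A1 j + t * A2 j - ((1-t) * A1 k + t * A2 k)
                  = A1 j - A1 k := by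
                rw [hej, hek]; ring
              rw [heq]
              exact hA1sep j k hjk
  exact (seg1.trans seg2).trans seg3

lemma pi0_zero : pi0 (0 : EE d) = 0 := by
  ext i; simp only [pi0_apply]; split <;> simp

variable {r} in
lemma canon_mem (hd : 2 ≤ d) (hr : ∀ k, 0 < r k) (hr' : ∀ k, 2 * r k < 1)
    (σ : Equiv.Perm (Fin N)) :
    (fun k => (((1:ℝ) + (σ k : ℕ)) • ee0 : EE d)) ∈ Sset r := by
  have hkey : (fun k => (((1:ℝ) + (σ k : ℕ)) • ee0 : EE d))
      = fun k => (((1:ℝ) + (σ k : ℕ)) • ee0 + (0 : EE d)) := by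
    funext k; rw [add_zero]
  rw [hkey]
  apply mem_std hd hr hr' (fun k => (1:ℝ) + (σ k : ℕ)) (fun _ => 0)
  · intro k
    have : (0:ℝ) ≤ ((σ k : ℕ) : ℝ) := Nat.cast_nonneg _
    linarith
  · intro k; exact pi0_zero
  · intro k; simp
  · intro j k hjk
    left
    have h1 : ((σ j : Fin N) : ℕ) ≠ ((σ k : Fin N) : ℕ) := by
      intro h
      exact hjk (σ.injective (Fin.val_injective h))
    have := nat_gap h1
    convert this using 2
    ring

variable {r} in
lemma toIdentity (hd : 2 ≤ d) (hr : ∀ k, 0 < r k) (hr' : ∀ k, 2 * r k < 1)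
    (σ : Equiv.Perm (Fin N)) :
    JoinedIn (Sset r) (fun k => (((1:ℝ) + (σ k : ℕ)) • ee0 : EE d))
      (fun k => (((1:ℝ) + (k : ℕ)) • ee0 : EE d)) := by
  revert hr hr' σ
  revert r
  cases N with
  | zero =>
    intro r hr hr' σ
    have hempty : (fun k : Fin 0 => (((1:ℝ) + (σ k : ℕ)) • ee0 : EE d))
        = fun k : Fin 0 => (((1:ℝ) + (k : ℕ)) • ee0 : EE d) := by
      funext k; exact k.elim0
    rw [hempty]
    apply JoinedIn.refl
    rw [mem_Sset_iff r hd hr]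
    exact ⟨fun k => k.elim0, fun j k hjk => j.elim0⟩
  | succ n =>
    intro r hr hr' σ
    have hmem : σ ∈ Submonoid.closure
        (Set.range fun i : Fin n => Equiv.swap i.castSucc i.succ) := by
      rw [Equiv.Perm.mclosure_swap_castSucc_succ]
      trivial
    obtain ⟨l, hl, hprod⟩ := Submonoid.exists_list_of_mem_closure hmem
    subst hprod
    clear hmem
    induction l with
    | nil =>
      simp only [List.prod_nil]
      have hone : (fun k : Fin (n+1) => (((1:ℝ) + ((1 : Equiv.Perm (Fin (n+1))) k : ℕ)) • ee0 : EE d))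
          = fun k : Fin (n+1) => (((1:ℝ) + (k : ℕ)) • ee0 : EE d) := rfl
      rw [hone]
      apply JoinedIn.refl
      have := canon_mem (r := r) hd hr hr' 1
      simpa using this
    | cons τ l ih =>
      have hτ : τ ∈ Set.range fun i : Fin n => Equiv.swap i.castSucc i.succ :=
        hl τ (List.mem_cons_self (a := τ) (l := l))
      obtain ⟨i, hi⟩ := hτ
      rw [List.prod_cons, ← hi]
      have hcs : ((i.succ : Fin (n+1)) : ℕ) = ((i.castSucc : Fin (n+1)) : ℕ) + 1 := by
        simp [Fin.val_succ, Fin.coe_castSucc]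
      have hswap := swap_move (r := r) hd hr hr' l.prod i.castSucc i.succ hcs
      exact (hswap.symm).trans (ih (fun s hs => hl s (List.mem_cons_of_mem τ hs)))

theorem stmt_6 {d : ℕ} [NeZero d] (hd : 2 ≤ d) {N : ℕ}
    (r : Fin N → ℝ) (hr : ∀ k, 0 < r k) (hr' : ∀ k, 2 * r k < 1) :
    ∀ x ∈ {x : Fin N → EuclideanSpace ℝ (Fin d) |
        (∀ k, closedBall (x k) (r k) ⊆
          {z : EuclideanSpace ℝ (Fin d) |
            0 < z 0 ∧ (∑ i ∈ Finset.univ.erase (0 : Fin d), (z i) ^ 2) < 1}) ∧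
        Pairwise fun j k => closedBall (x j) (r j) ∩ closedBall (x k) (r k) = ∅},
      ∀ y ∈ {x : Fin N → EuclideanSpace ℝ (Fin d) |
        (∀ k, closedBall (x k) (r k) ⊆
          {z : EuclideanSpace ℝ (Fin d) |
            0 < z 0 ∧ (∑ i ∈ Finset.univ.erase (0 : Fin d), (z i) ^ 2) < 1}) ∧
        Pairwise fun j k => closedBall (x j) (r j) ∩ closedBall (x k) (r k) = ∅},
      JoinedIn {x : Fin N → EuclideanSpace ℝ (Fin d) |
        (∀ k, closedBall (x k) (r k) ⊆
          {z : EuclideanSpace ℝ (Fin d) |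
            0 < z 0 ∧ (∑ i ∈ Finset.univ.erase (0 : Fin d), (z i) ^ 2) < 1}) ∧
        Pairwise fun j k => closedBall (x j) (r j) ∩ closedBall (x k) (r k) = ∅}
      x y := by
  intro x hx y hy
  show JoinedIn (Sset r) x y
  have hx' : x ∈ Sset r := hx
  have hy' : y ∈ Sset r := hy
  -- permutations from ranks
  have hinjx : Function.Injective (fun k => (⟨rnk x k, rnk_lt_N x k⟩ : Fin N)) := by
    intro j k h
    by_contra hne
    exact rnk_inj x hne (congrArg Fin.val h)
  have hinjy : Function.Injective (fun k => (⟨rnk y k, rnk_lt_N y k⟩ : Fin N)) := by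
    intro j k h
    by_contra hne
    exact rnk_inj y hne (congrArg Fin.val h)
  set σx : Equiv.Perm (Fin N) :=
    Equiv.ofBijective _ (Finite.injective_iff_bijective.mp hinjx) with hσx
  set σy : Equiv.Perm (Fin N) :=
    Equiv.ofBijective _ (Finite.injective_iff_bijective.mp hinjy) with hσy
  have hx2 : JoinedIn (Sset r) x (fun k => (((1:ℝ) + (σx k : ℕ)) • ee0 : EE d)) :=
    toCanon hd hr hr' hx'
  have hy2 : JoinedIn (Sset r) y (fun k => (((1:ℝ) + (σy k : ℕ)) • ee0 : EE d)) :=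
    toCanon hd hr hr' hy'
  have hx3 := toIdentity (r := r) hd hr hr' σx
  have hy3 := toIdentity (r := r) hd hr hr' σy
  exact ((hx2.trans hx3).trans hy3.symm).trans hy2.symm
end config
end
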